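/- arXiv:1003.4375 — 2 statements merged into one kernel-verified Lean document; each statement's English description precedes it below -/
import Mathlib

section
/- Let B be a nonzero linear differential polynomial belonging to (PS) ∩ K{X}. Then its ID-primitive part IDprim(B) also belongs to (PS) ∩ K{X}. -/
open MvPolynomial

namespace DPPE

/-- Differential variables: `(Sum.inl i, k)` is the `k`-th derivative of `xᵢ`;
`(Sum.inr j, k)` is the `k`-th derivative of `uⱼ`. -/
abbrev Vr (n : ℕ) := (Fin n ⊕ Fin (n - 1)) × ℕ

/-- The differential polynomial ring `K{X ∪ U}`. -/
abbrev R (K : Type) [Field K] (n : ℕ) := MvPolynomial (Vr n) K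

variable {K : Type} [Field K] {n : ℕ}

/-- The order of `f` in the differential indeterminate `v` (equal to `-1` if absent). -/
noncomputable def ordIn {A : Type} [CommSemiring A] (f : MvPolynomial (Vr n) A)
    (v : Fin n ⊕ Fin (n - 1)) : ℤ :=
  WithBot.unbotD (-1) ((f.vars.filter (fun w => w.1 = v)).image (fun w => (w.2 : ℤ))).max

/-- The (total) order of the differential polynomial `f`. -/
noncomputable def ordTot {A : Type} [CommSemiring A] (f : MvPolynomial (Vr n) A) : ℕ :=
  WithBot.unbotD 0 (f.vars.image Prod.snd).max

/-- `f` belongs to `K{X}`. -/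
def xOnly {A : Type} [CommSemiring A] (f : MvPolynomial (Vr n) A) : Prop :=
  ∀ w ∈ f.vars, (w.1).isLeft

/-- `f` belongs to `K{U}`. -/
def uOnly {A : Type} [CommSemiring A] (f : MvPolynomial (Vr n) A) : Prop :=
  ∀ w ∈ f.vars, (w.1).isRight

/-- `f` is a linear (degree at most 1) differential polynomial. -/
def IsLinearPoly {A : Type} [CommSemiring A] (f : MvPolynomial (Vr n) A) : Prop :=
  f.totalDegree ≤ 1

/-- The coefficient of the `k`-th derivative of the indeterminate `v` in `f`. -/
noncomputable def cf {A : Type} [CommSemiring A] (f : MvPolynomial (Vr n) A)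
    (v : Fin n ⊕ Fin (n - 1)) (k : ℕ) : A :=
  MvPolynomial.coeff (Finsupp.single (v, k) 1) f

/-- An order embedding realizing the ranking `R*` on `X ∪ U` that eliminates `U` with
respect to `X`, orderly on each block, with `x_n < ⋯ < x_1` and `u_1 < ⋯ < u_{n-1}`. -/
def rkk (w : Vr n) : Lex (Bool × Lex (ℕ × ℕ)) :=
  toLex (Sum.elim (fun i => (false, toLex (w.2, (i.rev : ℕ))))
    (fun j => (true, toLex (w.2, (j : ℕ)))) w.1)

/-- `v` is the lead (highest ranked derivative w.r.t. `R*`) of `g`. -/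
def IsLead {A : Type} [CommSemiring A] (g : MvPolynomial (Vr n) A) (v : Vr n) : Prop :=
  v ∈ g.vars ∧ ∀ w ∈ g.vars, rkk w ≤ rkk v

/-- A system `𝒫(X,U)` of `n` linear differential polynomial parametric equations
`xᵢ = Pᵢ(U) = aᵢ - Hᵢ(U)` in `n-1` differential parameters, over an ordinary
differential field `(K, der)`;  `D` is the induced derivation on `K{X ∪ U}`.
`Fᵢ = xᵢ - aᵢ + Hᵢ(U)`. -/
structure Sys (K : Type) [Field K] (n : ℕ) where
  hn : 2 ≤ n
  der : Derivation ℤ K K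
  D : Derivation ℤ (R K n) (R K n)
  hD_C : ∀ c : K, D (C c) = C (der c)
  hD_X : ∀ (v : Fin n ⊕ Fin (n - 1)) (k : ℕ), D (X (v, k)) = X (v, k + 1)
  a : Fin n → K
  H : Fin n → R K n
  H_hom : ∀ i, (H i).IsHomogeneous 1
  H_u : ∀ i, uOnly (H i)
  H_ne : ∃ i, H i ≠ 0
  param : ∀ j : Fin (n - 1), ∃ i, 0 ≤ ordIn (H i) (Sum.inr j)

namespace Sys

/-- `Fᵢ = xᵢ - aᵢ + Hᵢ(U)`. -/
noncomputable def F (S : Sys K n) (i : Fin n) : R K n :=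
  X (Sum.inl i, 0) - C (S.a i) + S.H i

/-- `oᵢ = ord(Fᵢ)`. -/
noncomputable def o (S : Sys K n) (i : Fin n) : ℕ := ordTot (S.F i)

/-- `γⱼ = min_i (oᵢ - ord(Fᵢ, uⱼ))`. -/
noncomputable def gamZ (S : Sys K n) (j : Fin (n - 1)) : ℤ :=
  (Finset.univ : Finset (Fin n)).inf' ⟨⟨0, by have h := S.hn; omega⟩, Finset.mem_univ _⟩
    fun i => (S.o i : ℤ) - ordIn (S.F i) (Sum.inr j)

noncomputable def gam (S : Sys K n) (j : Fin (n - 1)) : ℕ := (S.gamZ j).toNat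

/-- `N = ∑ oᵢ`. -/
noncomputable def Nn (S : Sys K n) : ℕ := ∑ i, S.o i

/-- The completeness index `γ = ∑ γⱼ`. -/
noncomputable def gamT (S : Sys K n) : ℕ := ∑ j, S.gam j

/-- `L = ∑ (N - oᵢ - γ + 1)`. -/
noncomputable def L (S : Sys K n) : ℕ := ∑ i, (S.Nn - S.o i - S.gamT + 1)

/-- `Lʰ = ∑ (N - oᵢ - γ)`. -/
noncomputable def Lh (S : Sys K n) : ℕ := ∑ i, (S.Nn - S.o i - S.gamT)

/-- The set `PS = {∂^k Fᵢ ∣ 0 ≤ k ≤ N - oᵢ - γ}`. -/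
def PSset (S : Sys K n) : Set (R K n) :=
  {g | ∃ i k, k ≤ S.Nn - S.o i - S.gamT ∧ g = (⇑S.D)^[k] (S.F i)}

/-- `f` belongs to the polynomial subring `K[𝒳][𝒱]`. -/
def inXV (S : Sys K n) {A : Type} [CommSemiring A] (f : MvPolynomial (Vr n) A) : Prop :=
  ∀ w ∈ f.vars,
    Sum.elim (fun i => w.2 ≤ S.Nn - S.o i - S.gamT)
      (fun j => w.2 ≤ S.Nn - S.gam j - S.gamT) w.1

/-- Membership in the ideal `(PS)` generated by `PS` in `K[𝒳][𝒱]`. -/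
def PSIdealMem (S : Sys K n) (f : R K n) : Prop :=
  f ∈ Ideal.span S.PSset ∧ S.inXV f

/-- Substitution `x_{ik} ↦ ∂^k(Pᵢ(U))` defining the implicit ideal. -/
noncomputable def subst (S : Sys K n) : R K n →ₐ[K] R K n :=
  aeval fun w =>
    Sum.elim (fun i => (⇑S.D)^[w.2] (C (S.a i) - S.H i)) (fun j => X (Sum.inr j, w.2)) w.1

/-- Membership in the implicit ideal `ID = {f ∈ K{X} ∣ f(P₁(U),…,Pₙ(U)) = 0}`. -/
def memID (S : Sys K n) (f : R K n) : Prop := xOnly f ∧ S.subst f = 0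

/-- Membership in the differential ideal `[A]` of `K{X}` generated by `A ∈ K{X}`. -/
def memDiffSpanX (S : Sys K n) (A f : R K n) : Prop :=
  xOnly f ∧ f ∈ Ideal.span {g | ∃ k, g = (⇑S.D)^[k] A}

/-- `dim ID = n - 1`: the implicit ideal has a characteristic set `{A}` with `A`
a nonzero linear differential polynomial, i.e. `ID = [A]`. -/
def DimFull (S : Sys K n) : Prop :=
  ∃ A : R K n, A ≠ 0 ∧ IsLinearPoly A ∧ xOnly A ∧ ∀ f, (S.memID f ↔ S.memDiffSpanX A f)

/-- The action of a linear differential operator `Lop = ∑ cₖ ∂^k ∈ K[∂]` on `f`. -/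
noncomputable def applyOp (S : Sys K n) (Lop : Polynomial K) (f : R K n) : R K n :=
  ∑ k ∈ Lop.support, C (Lop.coeff k) * (⇑S.D)^[k] f

/-- `Lop` is a left divisor of `Fop` in `K[∂]`. -/
def leftDvd (S : Sys K n) (Lop Fop : Polynomial K) : Prop :=
  ∃ Mop : Polynomial K, ∀ f : R K n, S.applyOp Fop f = S.applyOp Lop (S.applyOp Mop f)

/-- For `B ∈ ID` linear, written `B = ∑ 𝓕ᵢ(xᵢ - aᵢ)`: the operator `𝓕ᵢ ∈ K[∂]`. -/
noncomputable def opOf (S : Sys K n) (B : R K n) (i : Fin n) : Polynomial K :=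
  ∑ k ∈ Finset.range (ordTot B + 1), Polynomial.monomial k (cf B (Sum.inl i) k)

/-- `B` is `ID`-primitive: the greatest common left divisor of `𝓕₁,…,𝓕ₙ` lies in `K`. -/
def IDPrimitive (S : Sys K n) (B : R K n) : Prop :=
  ∀ Lop : Polynomial K, (∀ i, S.leftDvd Lop (S.opOf B i)) → Lop.natDegree = 0

/-- `B'` is an `ID`-primitive part of `B`:  `𝓕ᵢ = IDcont(B)·𝓛ᵢ` with `𝓛₁,…,𝓛ₙ`
coprime and `B' = ∑ 𝓛ᵢ(xᵢ - aᵢ)`. -/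
def IsIDPrimPart (S : Sys K n) (B B' : R K n) : Prop :=
  ∃ (Lop : Polynomial K) (Lfam : Fin n → Polynomial K),
    (∀ i f, S.applyOp (S.opOf B i) f = S.applyOp Lop (S.applyOp (Lfam i) f)) ∧
    (∀ Q : Polynomial K, (∀ i, S.leftDvd Q (Lfam i)) → Q.natDegree = 0) ∧
    B' = ∑ i, S.applyOp (Lfam i) (X (Sum.inl i, 0) - C (S.a i))

/-- The co-order of `B` in `(PS)`: the greatest `c` with `∂^c B ∈ (PS)`. -/
noncomputable def coOrd (S : Sys K n) (B : R K n) : ℕ :=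
  sSup {c : ℕ | S.PSIdealMem ((⇑S.D)^[c] B)}

/-- The leading coefficients vector `l(B) = (α₁,…,αₙ)`, `αᵢ` the coefficient of
`∂^{N - oᵢ - γ - c(B)}` in `𝓕ᵢ`. -/
noncomputable def lvec (S : Sys K n) (B : R K n) : Fin n → K :=
  fun i => cf B (Sum.inl i) (S.Nn - S.o i - S.gamT - S.coOrd B)

/-- The leading matrix `S` of the system: entry `(i,j)` is the coefficient of
`u_{n-j, oᵢ - γ_{n-j}}` in `Fᵢ`. -/
noncomputable def Smat (S : Sys K n) : Matrix (Fin n) (Fin (n - 1)) K :=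
  Matrix.of fun i j =>
    if S.gam j.rev ≤ S.o i then cf (S.F i) (Sum.inr j.rev) (S.o i - S.gam j.rev) else 0

/-- Row indices of the complete differential resultant matrix `M(L)`. -/
abbrev RI (S : Sys K n) := (i : Fin n) × Fin (S.Nn - S.o i - S.gamT + 1)

/-- Column indices corresponding to the variables `𝒱`. -/
abbrev CI (S : Sys K n) := (j : Fin (n - 1)) × Fin (S.Nn - S.gam j - S.gamT + 1)

/-- The principal matrix `M_{L-1}` of the system. -/
noncomputable def Mprin (S : Sys K n) : Matrix S.RI S.CI K :=
  Matrix.of fun ik jm => cf ((⇑S.D)^[(ik.2 : ℕ)] (S.F ik.1)) (Sum.inr jm.1) (jm.2 : ℕ)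

/-- The complete differential resultant matrix `M(L)` (last column holds the parts
`x_{ik} - ∂^k aᵢ`). -/
noncomputable def Mfull (S : Sys K n) : Matrix S.RI (S.CI ⊕ Unit) (R K n) :=
  Matrix.of fun ik c =>
    Sum.elim
      (fun jm => (C (cf ((⇑S.D)^[(ik.2 : ℕ)] (S.F ik.1)) (Sum.inr jm.1) (jm.2 : ℕ)) : R K n))
      (fun _ => X (Sum.inl ik.1, (ik.2 : ℕ)) - C ((⇑S.der)^[(ik.2 : ℕ)] (S.a ik.1))) c

/-- The linear complete differential resultant `∂CRes(F₁,…,Fₙ) = det M(L)`. -/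
noncomputable def dCRes (S : Sys K n) : R K n :=
  if h : Fintype.card (S.CI ⊕ Unit) = Fintype.card S.RI then
    (S.Mfull.submatrix (Fintype.equivOfCardEq h) id).det
  else 0

/-- `G` is the (reduced) Groebner basis associated to the system `𝒫(X,U)`,
w.r.t. the lex monomial order induced by the ranking `R*`. -/
def IsAssocGB (S : Sys K n) (G : Finset (R K n)) : Prop :=
  (∀ g ∈ G, g ≠ 0 ∧ IsLinearPoly g ∧ S.inXV g ∧ g ∈ Ideal.span S.PSset) ∧
  Ideal.span (G : Set (R K n)) = Ideal.span S.PSset ∧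
  (∀ g ∈ G, ∃ v : Vr n, IsLead g v ∧ cf g v.1 v.2 = 1 ∧ ∀ g' ∈ G, g' ≠ g → v ∉ g'.vars) ∧
  (∀ f : R K n, f ∈ Ideal.span S.PSset → S.inXV f → IsLinearPoly f → f ≠ 0 →
    ∃ g ∈ G, ∃ v : Vr n, IsLead g v ∧ IsLead f v)

end Sys

/-- `G₀ = G ∩ K{X}`. -/
noncomputable def G0 (G : Finset (R K n)) : Finset (R K n) :=
  @Finset.filter _ (fun g => xOnly g) (Classical.decPred _) G


section Aux

variable {K : Type} [Field K] {n : ℕ}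

/-! ### The `Φ` calculus for linear homogeneous polynomials -/

lemma cf_def (f : R K n) (v k) : cf f v k = MvPolynomial.coeff (Finsupp.single (v, k) 1) f := rfl

lemma mem_vars_of_cf_ne {f : R K n} {v k} (h : cf f v k ≠ 0) : ((v, k) : Vr n) ∈ f.vars := by
  rw [MvPolynomial.mem_vars]
  exact ⟨Finsupp.single (v, k) 1, by rw [MvPolynomial.mem_support_iff]; exact h, by simp⟩

lemma snd_le_ordTot {f : R K n} {w : Vr n} (h : w ∈ f.vars) : w.2 ≤ ordTot f := by
  have hmem : w.2 ∈ f.vars.image Prod.snd := Finset.mem_image_of_mem _ h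
  have hle := Finset.le_max hmem
  unfold ordTot
  cases hmax : (f.vars.image Prod.snd).max with
  | bot => rw [hmax] at hle; exact absurd hle (by simp)
  | coe m =>
    rw [hmax] at hle
    simp only [WithBot.unbotD_coe]
    exact_mod_cast hle

lemma cf_eq_zero_of_gt_ordTot {f : R K n} {v k} (h : ordTot f < k) : cf f v k = 0 := by
  by_contra hne
  exact absurd (snd_le_ordTot (mem_vars_of_cf_ne hne)) (by simpa using h)

/-- The linear map sending a finitely supported coefficient family to the corresponding
linear homogeneous polynomial. -/
noncomputable def Phi (c : Vr n →₀ K) : R K n :=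
  c.sum fun w a => MvPolynomial.monomial (Finsupp.single w 1) a

lemma Phi_zero : Phi (0 : Vr n →₀ K) = 0 := Finsupp.sum_zero_index

lemma Phi_single (w : Vr n) (a : K) :
    Phi (Finsupp.single w a) = MvPolynomial.monomial (Finsupp.single w 1) a :=
  Finsupp.sum_single_index (by simp)

lemma Phi_add (c d : Vr n →₀ K) : Phi (c + d) = Phi c + Phi d :=
  Finsupp.sum_add_index' (by simp) (by intro w a b; rw [map_add])

lemma Phi_finsetSum {ι : Type} (s : Finset ι) (c : ι → (Vr n →₀ K)) :
    Phi (∑ i ∈ s, c i) = ∑ i ∈ s, Phi (c i) := by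
  classical
  induction s using Finset.cons_induction with
  | empty => simp [Phi_zero]
  | cons i s hi ih => rw [Finset.sum_cons, Finset.sum_cons, Phi_add, ih]

lemma Phi_smul (a : K) (c : Vr n →₀ K) : Phi (a • c) = MvPolynomial.C a * Phi c := by
  unfold Phi
  rw [Finsupp.sum_smul_index' (by intro w; rw [map_zero]), Finsupp.mul_sum]
  apply Finsupp.sum_congr
  intro w _
  rw [MvPolynomial.C_mul_monomial, smul_eq_mul]

private lemma sum_ite_point (c : Vr n →₀ K) (f : Vr n → K → K) (hf : ∀ w, f w 0 = 0)
    (w₀ : Vr n) :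
    (∑ w ∈ c.support, if w = w₀ then f w (c w) else 0) = f w₀ (c w₀) := by
  rw [Finset.sum_ite_eq' c.support]
  split
  · rfl
  · next h => rw [Finsupp.notMem_support_iff.mp h, hf]

lemma coeff_Phi_single (c : Vr n →₀ K) (w : Vr n) :
    MvPolynomial.coeff (Finsupp.single w 1) (Phi c) = c w := by
  unfold Phi
  rw [Finsupp.sum, MvPolynomial.coeff_sum]
  have h1 : ∀ w' ∈ c.support,
      MvPolynomial.coeff (Finsupp.single w 1) (MvPolynomial.monomial (Finsupp.single w' 1) (c w'))
        = if w' = w then c w' else 0 := by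
    intro w' _
    rw [MvPolynomial.coeff_monomial]
    congr 1
    simp [Finsupp.single_left_inj (one_ne_zero (α := ℕ))]
  rw [Finset.sum_congr rfl h1]
  exact sum_ite_point c (fun _ a => a) (fun _ => rfl) w

lemma cf_Phi (c : Vr n →₀ K) (v k) : cf (Phi c) v k = c (v, k) := coeff_Phi_single c (v, k)

lemma coeff_Phi_of_ne (c : Vr n →₀ K) (d : Vr n →₀ ℕ) (hd : ∀ w : Vr n, d ≠ Finsupp.single w 1) :
    MvPolynomial.coeff d (Phi c) = 0 := by
  unfold Phi
  rw [Finsupp.sum, MvPolynomial.coeff_sum]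
  apply Finset.sum_eq_zero
  intro w _
  rw [MvPolynomial.coeff_monomial, if_neg (fun h => hd w h.symm)]

lemma Phi_inj {c d : Vr n →₀ K} (h : Phi c = Phi d) : c = d := by
  ext w
  have := congrArg (fun f => MvPolynomial.coeff (Finsupp.single w 1) f) h
  simpa [coeff_Phi_single] using this

lemma Phi_eq_zero {c : Vr n →₀ K} (h : Phi c = 0) : c = 0 :=
  Phi_inj (by rw [h, Phi_zero])

lemma mem_support_of_mem_vars_Phi {c : Vr n →₀ K} {w : Vr n} (h : w ∈ (Phi c).vars) :
    w ∈ c.support := by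
  rw [MvPolynomial.mem_vars] at h
  obtain ⟨d, hd, hw⟩ := h
  rw [MvPolynomial.mem_support_iff] at hd
  by_cases hs : ∃ w', d = Finsupp.single w' 1
  · obtain ⟨w', rfl⟩ := hs
    have hww : w = w' := by
      by_contra hne
      rw [Finsupp.mem_support_iff, Finsupp.single_apply, if_neg (fun h => hne h.symm)] at hw
      exact hw rfl
    subst hww
    rw [coeff_Phi_single] at hd
    exact Finsupp.mem_support_iff.mpr hd
  · push_neg at hs
    exact absurd (coeff_Phi_of_ne c d hs) hd


/-! ### The shift map `dmap` implementing `D` on coefficient families -/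

/-- The map on coefficient families corresponding to the derivation `D`. -/
noncomputable def dmap (der : Derivation ℤ K K) (c : Vr n →₀ K) : Vr n →₀ K :=
  c.sum fun w a => Finsupp.single w (der a) + Finsupp.single ((w.1, w.2 + 1) : Vr n) a

lemma dmap_single (der : Derivation ℤ K K) (w : Vr n) (a : K) :
    dmap der (Finsupp.single w a)
      = Finsupp.single w (der a) + Finsupp.single ((w.1, w.2 + 1) : Vr n) a :=
  Finsupp.sum_single_index (by simp)

lemma dmap_apply (der : Derivation ℤ K K) (c : Vr n →₀ K) (v : Fin n ⊕ Fin (n - 1)) (k : ℕ) :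
    dmap der c ((v, k) : Vr n)
      = der (c (v, k)) + (if k = 0 then 0 else c (v, k - 1)) := by
  unfold dmap
  rw [Finsupp.sum_apply]
  rw [Finsupp.sum]
  have h1 : ∀ w ∈ c.support,
      (Finsupp.single w (der (c w)) + Finsupp.single ((w.1, w.2 + 1) : Vr n) (c w))
        ((v, k) : Vr n)
      = (if w = ((v, k) : Vr n) then der (c w) else 0)
        + (if (w.1, w.2 + 1) = ((v, k) : Vr n) then c w else 0) := by
    intro w _
    rw [Finsupp.add_apply, Finsupp.single_apply, Finsupp.single_apply]
  rw [Finset.sum_congr rfl h1, Finset.sum_add_distrib]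
  congr 1
  · exact sum_ite_point c (fun _ a => der a) (fun _ => map_zero der) (v, k)
  · cases k with
    | zero =>
      rw [if_pos rfl]
      apply Finset.sum_eq_zero
      intro w _
      rw [if_neg (by simp [Prod.ext_iff])]
    | succ k =>
      rw [if_neg (Nat.succ_ne_zero k)]
      have h2 : ∀ w ∈ c.support,
          (if ((w.1, w.2 + 1) : Vr n) = ((v, k + 1) : Vr n) then c w else 0)
            = (if w = ((v, k) : Vr n) then c w else 0) := by
        intro w _
        congr 1
        simp [Prod.ext_iff]
      rw [Finset.sum_congr rfl h2]
      exact sum_ite_point c (fun _ a => a) (fun _ => rfl) (v, k)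

lemma dmap_vanish {der : Derivation ℤ K K} {c : Vr n →₀ K} {m : ℕ}
    (hc : ∀ v t, m < t → c ((v, t) : Vr n) = 0) :
    ∀ v t, m + 1 < t → dmap der c ((v, t) : Vr n) = 0 := by
  intro v t ht
  obtain ⟨s, rfl⟩ : ∃ s, t = s + 1 := ⟨t - 1, by omega⟩
  rw [dmap_apply, hc v (s + 1) (by omega), map_zero, if_neg (Nat.succ_ne_zero s)]
  simpa using hc v s (by omega)

lemma dmap_top {der : Derivation ℤ K K} {c : Vr n →₀ K} {m : ℕ}
    (hc : ∀ v t, m < t → c ((v, t) : Vr n) = 0) (v) :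
    dmap der c ((v, m + 1) : Vr n) = c ((v, m) : Vr n) := by
  rw [dmap_apply, hc v (m + 1) (by omega), map_zero, if_neg (Nat.succ_ne_zero m), zero_add]
  simp

lemma dmap_iter {der : Derivation ℤ K K} {c : Vr n →₀ K} {m : ℕ}
    (hc : ∀ v t, m < t → c ((v, t) : Vr n) = 0) (k : ℕ) :
    (∀ v t, m + k < t → (dmap der)^[k] c ((v, t) : Vr n) = 0)
      ∧ (∀ v, (dmap der)^[k] c ((v, m + k) : Vr n) = c ((v, m) : Vr n)) := by
  induction k with
  | zero => exact ⟨fun v t ht => hc v t (by omega), fun v => rfl⟩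
  | succ k ih =>
    simp only [Function.iterate_succ_apply']
    refine ⟨fun v t ht => dmap_vanish ih.1 v t (by omega), fun v => ?_⟩
    have := dmap_top (der := der) ih.1 v
    rw [show m + (k + 1) = (m + k) + 1 from rfl, this, ih.2 v]

/-! ### The map `opF` implementing `applyOp` on coefficient families -/

noncomputable def opF (der : Derivation ℤ K K) (L : Polynomial K) (c : Vr n →₀ K) : Vr n →₀ K :=
  ∑ k ∈ L.support, L.coeff k • (dmap der)^[k] c

lemma opF_top {der : Derivation ℤ K K} {L : Polynomial K} (hL : L ≠ 0) {c : Vr n →₀ K} {m : ℕ}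
    (hc : ∀ v t, m < t → c ((v, t) : Vr n) = 0) (v) :
    opF der L c ((v, m + L.natDegree) : Vr n) = L.leadingCoeff * c ((v, m) : Vr n) := by
  unfold opF
  rw [Finsupp.finset_sum_apply, Finset.sum_eq_single L.natDegree]
  · rw [Finsupp.smul_apply, (dmap_iter hc L.natDegree).2 v, smul_eq_mul]
    rfl
  · intro k hk hne
    have hk' : k < L.natDegree := lt_of_le_of_ne (Polynomial.le_natDegree_of_mem_supp k hk) hne
    rw [Finsupp.smul_apply, (dmap_iter hc k).1 v _ (by omega), smul_zero]
  · intro h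
    exact absurd (Polynomial.natDegree_mem_support_of_nonzero hL) h

/-! ### The embedding of a differential operator as a coefficient family -/

noncomputable def embv (v : Fin n ⊕ Fin (n - 1)) (L : Polynomial K) : Vr n →₀ K :=
  ∑ k ∈ L.support, Finsupp.single ((v, k) : Vr n) (L.coeff k)

lemma embv_apply (v : Fin n ⊕ Fin (n - 1)) (L : Polynomial K) (v' : Fin n ⊕ Fin (n - 1)) (k : ℕ) :
    embv v L ((v', k) : Vr n) = if v' = v then L.coeff k else 0 := by
  unfold embv
  rw [Finsupp.finset_sum_apply]
  by_cases h : v' = v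
  · subst h
    rw [if_pos rfl]
    have h1 : ∀ k' ∈ L.support,
        (Finsupp.single ((v', k') : Vr n) (L.coeff k')) ((v', k) : Vr n)
          = if k' = k then L.coeff k' else 0 := by
      intro k' _
      rw [Finsupp.single_apply]
      congr 1
      simp [Prod.ext_iff]
    rw [Finset.sum_congr rfl h1, Finset.sum_ite_eq' L.support]
    split
    · rfl
    · next hk => exact (Polynomial.notMem_support_iff.mp hk).symm
  · rw [if_neg h]
    apply Finset.sum_eq_zero
    intro k' _
    rw [Finsupp.single_apply, if_neg (by simp [Prod.ext_iff]; intro hv _; exact absurd hv.symm h)]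

lemma embv_support {v : Fin n ⊕ Fin (n - 1)} {L : Polynomial K} {w : Vr n}
    (h : w ∈ (embv v L).support) : w.1 = v ∧ w.2 ∈ L.support := by
  rw [Finsupp.mem_support_iff] at h
  have hw : embv v L ((w.1, w.2) : Vr n) ≠ 0 := h
  rw [embv_apply] at hw
  by_cases hv : w.1 = v
  · rw [if_pos hv] at hw
    exact ⟨hv, Polynomial.mem_support_iff.mpr hw⟩
  · rw [if_neg hv] at hw
    exact absurd rfl hw

lemma embv_vanish (v : Fin n ⊕ Fin (n - 1)) (L : Polynomial K) :
    ∀ v' t, L.natDegree < t → embv v L ((v', t) : Vr n) = 0 := by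
  intro v' t ht
  rw [embv_apply]
  split
  · exact Polynomial.coeff_eq_zero_of_natDegree_lt ht
  · rfl

end Aux



section AuxSys

variable {K : Type} [Field K] {n : ℕ} (S : Sys K n)

lemma monomial_single_eq (w : Vr n) (a : K) :
    (MvPolynomial.monomial (Finsupp.single w 1) a : R K n) = MvPolynomial.C a * MvPolynomial.X w :=
  MvPolynomial.C_mul_X_eq_monomial.symm

/-! ### Basic facts about `D` and `applyOp` -/

lemma D_iter_add (k : ℕ) (f g : R K n) :
    (⇑S.D)^[k] (f + g) = (⇑S.D)^[k] f + (⇑S.D)^[k] g := by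
  induction k generalizing f g with
  | zero => rfl
  | succ k ih => rw [Function.iterate_succ_apply, Function.iterate_succ_apply,
      Function.iterate_succ_apply, map_add, ih]

lemma D_iter_zero (k : ℕ) : (⇑S.D)^[k] (0 : R K n) = 0 := by
  induction k with
  | zero => rfl
  | succ k ih => rw [Function.iterate_succ_apply, map_zero, ih]

lemma D_iter_sub (k : ℕ) (f g : R K n) :
    (⇑S.D)^[k] (f - g) = (⇑S.D)^[k] f - (⇑S.D)^[k] g := by
  induction k generalizing f g with
  | zero => rfl
  | succ k ih => rw [Function.iterate_succ_apply, Function.iterate_succ_apply,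
      Function.iterate_succ_apply, map_sub, ih]

lemma D_iter_C (k : ℕ) (a : K) :
    (⇑S.D)^[k] (MvPolynomial.C a : R K n) = MvPolynomial.C ((⇑S.der)^[k] a) := by
  induction k generalizing a with
  | zero => rfl
  | succ k ih => rw [Function.iterate_succ_apply, Function.iterate_succ_apply, S.hD_C, ih]

lemma applyOp_add (L : Polynomial K) (f g : R K n) :
    S.applyOp L (f + g) = S.applyOp L f + S.applyOp L g := by
  unfold Sys.applyOp
  rw [← Finset.sum_add_distrib]
  apply Finset.sum_congr rfl
  intro k _
  rw [D_iter_add, mul_add]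

lemma applyOp_sub (L : Polynomial K) (f g : R K n) :
    S.applyOp L (f - g) = S.applyOp L f - S.applyOp L g := by
  unfold Sys.applyOp
  rw [← Finset.sum_sub_distrib]
  apply Finset.sum_congr rfl
  intro k _
  rw [D_iter_sub, mul_sub]

lemma applyOp_finsetSum {ι : Type} (L : Polynomial K) (s : Finset ι) (f : ι → R K n) :
    S.applyOp L (∑ i ∈ s, f i) = ∑ i ∈ s, S.applyOp L (f i) := by
  classical
  induction s using Finset.cons_induction with
  | empty =>
    rw [Finset.sum_empty]
    unfold Sys.applyOp
    apply Finset.sum_eq_zero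
    intro k _
    rw [D_iter_zero, mul_zero]
  | cons i s hi ih => rw [Finset.sum_cons, Finset.sum_cons, applyOp_add, ih]

lemma applyOp_zero_left (f : R K n) : S.applyOp 0 f = 0 := by
  unfold Sys.applyOp
  rw [Polynomial.support_zero, Finset.sum_empty]

/-! ### `applyOp` on `Phi` families -/

lemma D_monomial_single (w : Vr n) (a : K) :
    S.D (MvPolynomial.monomial (Finsupp.single w 1) a)
      = MvPolynomial.monomial (Finsupp.single w 1) (S.der a)
        + MvPolynomial.monomial (Finsupp.single ((w.1, w.2 + 1) : Vr n) 1) a := by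
  obtain ⟨v, k⟩ := w
  rw [monomial_single_eq, monomial_single_eq, monomial_single_eq, Derivation.leibniz,
    smul_eq_mul, smul_eq_mul, S.hD_X v k, S.hD_C a]
  ring

lemma D_Phi (c : Vr n →₀ K) : S.D (Phi c) = Phi (dmap S.der c) := by
  have h1 : Phi c = ∑ w ∈ c.support, MvPolynomial.monomial (Finsupp.single w 1) (c w) := rfl
  have h2 : dmap S.der c = ∑ w ∈ c.support,
      (Finsupp.single w (S.der (c w)) + Finsupp.single ((w.1, w.2 + 1) : Vr n) (c w)) := rfl
  rw [h1, h2, map_sum, Phi_finsetSum]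
  apply Finset.sum_congr rfl
  intro w _
  rw [Phi_add, Phi_single, Phi_single, D_monomial_single]

lemma D_iter_Phi (k : ℕ) (c : Vr n →₀ K) :
    (⇑S.D)^[k] (Phi c) = Phi ((dmap S.der)^[k] c) := by
  induction k generalizing c with
  | zero => rfl
  | succ k ih => rw [Function.iterate_succ_apply, Function.iterate_succ_apply, D_Phi, ih]

lemma applyOp_Phi (L : Polynomial K) (c : Vr n →₀ K) :
    S.applyOp L (Phi c) = Phi (opF S.der L c) := by
  unfold Sys.applyOp opF
  rw [Phi_finsetSum]
  apply Finset.sum_congr rfl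
  intro k _
  rw [D_iter_Phi, Phi_smul]

lemma X_eq_Phi (v : Fin n ⊕ Fin (n - 1)) (k : ℕ) :
    (MvPolynomial.X ((v, k) : Vr n) : R K n) = Phi (Finsupp.single ((v, k) : Vr n) 1) := by
  rw [Phi_single, monomial_single_eq, map_one, one_mul]

lemma dmap_iter_single_one (v : Fin n ⊕ Fin (n - 1)) (k : ℕ) :
    (dmap S.der)^[k] (Finsupp.single ((v, 0) : Vr n) 1) = Finsupp.single ((v, k) : Vr n) 1 := by
  induction k with
  | zero => rfl
  | succ k ih =>
    rw [Function.iterate_succ_apply', ih, dmap_single, Derivation.map_one_eq_zero,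
      Finsupp.single_zero, zero_add]

lemma applyOp_X (L : Polynomial K) (v : Fin n ⊕ Fin (n - 1)) :
    S.applyOp L (MvPolynomial.X ((v, 0) : Vr n)) = Phi (embv v L) := by
  rw [X_eq_Phi, applyOp_Phi]
  congr 1
  unfold opF embv
  apply Finset.sum_congr rfl
  intro k _
  rw [dmap_iter_single_one, Finsupp.smul_single, smul_eq_mul, mul_one]

lemma applyOp_C (L : Polynomial K) (a : K) :
    S.applyOp L (MvPolynomial.C a : R K n)
      = MvPolynomial.C (∑ k ∈ L.support, L.coeff k * (⇑S.der)^[k] a) := by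
  unfold Sys.applyOp
  rw [map_sum]
  apply Finset.sum_congr rfl
  intro k _
  rw [D_iter_C, map_mul]

/-! ### The substitution morphism -/

lemma subst_C (a : K) : S.subst (MvPolynomial.C a) = MvPolynomial.C a := by
  unfold Sys.subst
  rw [MvPolynomial.aeval_C]
  rfl

lemma subst_X (v : Fin n ⊕ Fin (n - 1)) (k : ℕ) :
    S.subst (MvPolynomial.X ((v, k) : Vr n))
      = Sum.elim (fun i => (⇑S.D)^[k] (MvPolynomial.C (S.a i) - S.H i))
          (fun j => MvPolynomial.X ((Sum.inr j, k) : Vr n)) v := by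
  unfold Sys.subst
  rw [MvPolynomial.aeval_X]

lemma subst_X_succ (v : Fin n ⊕ Fin (n - 1)) (k : ℕ) :
    S.subst (MvPolynomial.X ((v, k + 1) : Vr n))
      = S.D (S.subst (MvPolynomial.X ((v, k) : Vr n))) := by
  rw [subst_X, subst_X]
  cases v with
  | inl i =>
    simp only [Sum.elim_inl]
    rw [Function.iterate_succ_apply']
  | inr j =>
    simp only [Sum.elim_inr]
    rw [S.hD_X]

lemma subst_D (f : R K n) : S.subst (S.D f) = S.D (S.subst f) := by
  induction f using MvPolynomial.induction_on with
  | C a => rw [S.hD_C, subst_C, subst_C, S.hD_C]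
  | add p q hp hq => rw [map_add, map_add, map_add, hp, hq, map_add]
  | mul_X p w hp =>
    obtain ⟨v, k⟩ := w
    rw [Derivation.leibniz, smul_eq_mul, smul_eq_mul, S.hD_X v k, map_add, map_mul, map_mul,
      map_mul, hp, subst_X_succ, Derivation.leibniz, smul_eq_mul, smul_eq_mul]

lemma subst_D_iter (k : ℕ) (f : R K n) :
    S.subst ((⇑S.D)^[k] f) = (⇑S.D)^[k] (S.subst f) := by
  induction k generalizing f with
  | zero => rfl
  | succ k ih => rw [Function.iterate_succ_apply, Function.iterate_succ_apply, ih, subst_D]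

lemma subst_applyOp (L : Polynomial K) (f : R K n) :
    S.subst (S.applyOp L f) = S.applyOp L (S.subst f) := by
  unfold Sys.applyOp
  rw [map_sum]
  apply Finset.sum_congr rfl
  intro k _
  rw [map_mul, subst_C, subst_D_iter]

/-! ### Homogeneous linear polynomials are `Phi` families -/

lemma degree_one_single (d : Vr n →₀ ℕ) (h : (d.sum fun _ c => c) = 1) :
    ∃ w : Vr n, d = Finsupp.single w 1 := by
  have hsum : ∑ x ∈ d.support, d x = 1 := h
  have hcard : d.support.card ≤ 1 := by
    by_contra hc
    push_neg at hc
    have h2 : d.support.card ≤ ∑ x ∈ d.support, d x := by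
      calc d.support.card = ∑ _x ∈ d.support, 1 := by
            rw [Finset.sum_const, smul_eq_mul, mul_one]
        _ ≤ ∑ x ∈ d.support, d x := Finset.sum_le_sum
            (fun x hx => Nat.one_le_iff_ne_zero.mpr (Finsupp.mem_support_iff.mp hx))
    omega
  rcases Nat.le_one_iff_eq_zero_or_eq_one.mp hcard with h0 | h1
  · exfalso
    rw [Finset.card_eq_zero.mp h0, Finset.sum_empty] at hsum
    exact one_ne_zero hsum.symm
  · obtain ⟨w, hw⟩ := Finset.card_eq_one.mp h1
    refine ⟨w, ?_⟩
    have h2 : d = Finsupp.single w (d w) := by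
      ext x
      by_cases hx : x = w
      · subst hx; rw [Finsupp.single_apply, if_pos rfl]
      · have hxs : x ∉ d.support := by rw [hw]; simp [hx]
        rw [Finsupp.notMem_support_iff.mp hxs, Finsupp.single_apply,
          if_neg (fun hh => hx hh.symm)]
    have h3 : d w = 1 := by
      rw [hw, Finset.sum_singleton] at hsum
      exact hsum
    rw [h2, h3]

lemma exists_Phi_of_isHomogeneous {f : R K n} (hf : f.IsHomogeneous 1) :
    ∃ c : Vr n →₀ K, f = Phi c := by
  classical
  have hd : ∀ d ∈ f.support, ∃ w : Vr n, d = Finsupp.single w 1 := by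
    intro d hdm
    have hco : MvPolynomial.coeff d f ≠ 0 := MvPolynomial.mem_support_iff.mp hdm
    have hw := hf hco
    apply degree_one_single
    rw [← hw, Finsupp.weight_apply]
    apply Finsupp.sum_congr
    intro x _
    simp
  choose wfn hwfn using hd
  refine ⟨∑ d ∈ f.support.attach, Finsupp.single (wfn d.1 d.2) (MvPolynomial.coeff d.1 f), ?_⟩
  rw [Phi_finsetSum]
  conv_lhs => rw [← MvPolynomial.support_sum_monomial_coeff f]
  rw [← Finset.sum_attach f.support (fun d => MvPolynomial.monomial d (MvPolynomial.coeff d f))]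
  apply Finset.sum_congr rfl
  intro d _
  rw [Phi_single, ← hwfn d.1 d.2]

lemma mem_vars_Phi_of_mem_support {c : Vr n →₀ K} {w : Vr n} (h : w ∈ c.support) :
    w ∈ (Phi c).vars := by
  apply mem_vars_of_cf_ne (v := w.1) (k := w.2)
  rw [cf_Phi]
  exact Finsupp.mem_support_iff.mp h

lemma subst_H (i : Fin n) : S.subst (S.H i) = S.H i := by
  obtain ⟨c, hc⟩ := exists_Phi_of_isHomogeneous (S.H_hom i)
  have hsupp : ∀ w ∈ c.support, (w.1 : Fin n ⊕ Fin (n - 1)).isRight = true := by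
    intro w hwm
    apply S.H_u i
    rw [hc]
    exact mem_vars_Phi_of_mem_support hwm
  rw [hc]
  unfold Phi
  rw [Finsupp.sum, map_sum]
  apply Finset.sum_congr rfl
  intro w hwm
  obtain ⟨j, hj⟩ := Sum.isRight_iff.mp (hsupp w hwm)
  rw [monomial_single_eq, map_mul, subst_C]
  congr 1
  have hw : w = ((Sum.inr j, w.2) : Vr n) := by rw [← hj]
  rw [hw, subst_X]
  rfl

lemma subst_F (i : Fin n) : S.subst (S.F i) = 0 := by
  unfold Sys.F
  rw [map_add, map_sub, subst_X, subst_C, subst_H]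
  simp only [Sum.elim_inl, Function.iterate_zero, id_eq]
  ring

lemma subst_span_PS {f : R K n} (hf : f ∈ Ideal.span S.PSset) : S.subst f = 0 := by
  have hPS : S.PSset ⊆ (RingHom.ker (S.subst : R K n →+* R K n) : Set (R K n)) := by
    rintro g ⟨i, k, _, rfl⟩
    rw [SetLike.mem_coe, RingHom.mem_ker]
    show S.subst ((⇑S.D)^[k] (S.F i)) = 0
    rw [subst_D_iter, subst_F, D_iter_zero]
  have := Ideal.span_le.mpr hPS hf
  rwa [RingHom.mem_ker] at this

/-! ### Coefficients of `opOf` -/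

lemma opOf_coeff (B : R K n) (i : Fin n) (k : ℕ) :
    (S.opOf B i).coeff k = cf B (Sum.inl i) k := by
  unfold Sys.opOf
  rw [Polynomial.finset_sum_coeff]
  simp only [Polynomial.coeff_monomial]
  rw [Finset.sum_ite_eq' (Finset.range (ordTot B + 1))]
  split
  · rfl
  · next h =>
    rw [Finset.mem_range, not_lt] at h
    exact (cf_eq_zero_of_gt_ordTot (by omega)).symm

lemma opOf_natDegree_le {B : R K n} (hBX : S.inXV B) (i : Fin n) :
    (S.opOf B i).natDegree ≤ S.Nn - S.o i - S.gamT := by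
  rw [Polynomial.natDegree_le_iff_coeff_eq_zero]
  intro k hk
  rw [opOf_coeff]
  by_contra hne
  have := hBX _ (mem_vars_of_cf_ne hne)
  simp only [Sum.elim_inl] at this
  omega


lemma applyOp_zero_right (L : Polynomial K) : S.applyOp L (0 : R K n) = 0 := by
  unfold Sys.applyOp
  apply Finset.sum_eq_zero
  intro k _
  rw [D_iter_zero, mul_zero]

lemma applyOp_neg (L : Polynomial K) (f : R K n) : S.applyOp L (-f) = - S.applyOp L f := by
  have := applyOp_sub S L 0 f
  rw [zero_sub, applyOp_zero_right, zero_sub] at this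
  exact this

lemma eq_C_of_coeffs (p : R K n)
    (h : ∀ d : Vr n →₀ ℕ, d ≠ 0 → MvPolynomial.coeff d p = 0) :
    p = MvPolynomial.C (MvPolynomial.coeff 0 p) := by
  apply MvPolynomial.ext
  intro d
  rw [MvPolynomial.coeff_C]
  by_cases hd : d = 0
  · subst hd
    rw [if_pos rfl]
  · rw [if_neg (fun hh => hd hh.symm), h d hd]

/-- The generic representation of `∑ applyOp (Lf i) (xᵢ - aᵢ)`. -/
lemma sum_applyOp_X_sub_C (Lf : Fin n → Polynomial K) :
    ∑ i, S.applyOp (Lf i) (MvPolynomial.X ((Sum.inl i, 0) : Vr n) - MvPolynomial.C (S.a i))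
      = Phi (∑ i, embv (Sum.inl i) (Lf i))
        - MvPolynomial.C (∑ i, ∑ k ∈ (Lf i).support, (Lf i).coeff k * (⇑S.der)^[k] (S.a i)) := by
  rw [Phi_finsetSum, map_sum, ← Finset.sum_sub_distrib]
  apply Finset.sum_congr rfl
  intro i _
  rw [applyOp_sub, applyOp_X, applyOp_C]

private lemma single_one_ne_zero (w : Vr n) : (Finsupp.single w 1 : Vr n →₀ ℕ) ≠ 0 := by
  intro h
  have h2 := congrArg (fun d => d w) h
  simp [Finsupp.single_eq_same] at h2

lemma Phi_eq_C {W : Vr n →₀ K} {cc : K} (h : Phi W = MvPolynomial.C cc) : W = 0 ∧ cc = 0 := by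
  have hW : W = 0 := by
    ext w
    have h2 := congrArg (fun f => MvPolynomial.coeff (Finsupp.single w 1) f) h
    rw [coeff_Phi_single, MvPolynomial.coeff_C,
      if_neg (fun hh => single_one_ne_zero w hh.symm)] at h2
    rw [h2]
    rfl
  refine ⟨hW, ?_⟩
  rw [hW, Phi_zero] at h
  have h3 := congrArg (fun f => MvPolynomial.coeff 0 f) h
  simp only [MvPolynomial.coeff_zero] at h3
  rw [MvPolynomial.coeff_C, if_pos rfl] at h3
  exact h3.symm

end AuxSys

/-- Let `B` be a nonzero linear differential polynomial belonging to
`(PS) ∩ K{X}`. Then its `ID`-primitive part `IDprim(B)` also belongs to `(PS) ∩ K{X}`. -/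
theorem statement_0 {K : Type} [Field K] {n : ℕ} (S : Sys K n) (B B' : R K n)
    (hB0 : B ≠ 0) (hBlin : IsLinearPoly B) (hBPS : S.PSIdealMem B) (hBx : xOnly B)
    (hprim : S.IsIDPrimPart B B') :
    S.PSIdealMem B' ∧ xOnly B' := by
  classical
  obtain ⟨Lop, Lfam, hcomp, _hcop, hB'⟩ := hprim
  -- The coefficient family of the linear part of `B`.
  set G : Vr n →₀ K := ∑ i, embv (Sum.inl i) (S.opOf B i) with hG
  have hGapply : ∀ (v : Fin n ⊕ Fin (n - 1)) (k : ℕ),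
      G ((v, k) : Vr n) = Sum.elim (fun i => cf B (Sum.inl i) k) (fun _ => (0 : K)) v := by
    intro v k
    rw [hG, Finsupp.finset_sum_apply]
    cases v with
    | inl i =>
      rw [Sum.elim_inl, Finset.sum_eq_single i]
      · rw [embv_apply, if_pos rfl, opOf_coeff]
      · intro i' _ hne
        rw [embv_apply, if_neg (fun h => hne (by injection h with h; exact h.symm ▸ rfl))]
      · intro h
        exact absurd (Finset.mem_univ i) h
    | inr j =>
      rw [Sum.elim_inr]
      apply Finset.sum_eq_zero
      intro i _
      rw [embv_apply, if_neg (by simp)]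
  -- Step A : `B = Phi G + C e` for some constant `e`.
  have hkey : ∀ d : (Vr n) →₀ ℕ, d ≠ 0 → MvPolynomial.coeff d (B - Phi G) = 0 := by
    intro d hd
    rw [MvPolynomial.coeff_sub]
    by_cases hs : ∃ w : Vr n, d = Finsupp.single w 1
    · obtain ⟨w, rfl⟩ := hs
      rw [coeff_Phi_single]
      obtain ⟨v, k⟩ := w
      rw [hGapply]
      cases v with
      | inl i =>
        rw [Sum.elim_inl]
        exact sub_self _
      | inr j =>
        rw [Sum.elim_inr, sub_zero]
        by_contra hne
        have hmem := hBx _ (mem_vars_of_cf_ne (v := Sum.inr j) (k := k) hne)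
        simp at hmem
    · push_neg at hs
      rw [coeff_Phi_of_ne _ _ hs, sub_zero]
      apply MvPolynomial.coeff_eq_zero_of_totalDegree_lt
      have h0 : ∑ x ∈ d.support, d x ≠ 0 := by
        intro h
        apply hd
        ext x
        simp only [Finsupp.coe_zero, Pi.zero_apply]
        by_cases hx : x ∈ d.support
        · exact Finset.sum_eq_zero_iff.mp h x hx
        · exact Finsupp.notMem_support_iff.mp hx
      have h1 : ∑ x ∈ d.support, d x ≠ 1 := by
        intro h
        obtain ⟨w, hw⟩ := degree_one_single d h
        exact hs w hw
      have h2 : B.totalDegree ≤ 1 := hBlin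
      omega
  have hBrep : ∃ e : K, B = Phi G + MvPolynomial.C e := by
    refine ⟨MvPolynomial.coeff 0 (B - Phi G), ?_⟩
    have h3 := eq_C_of_coeffs _ hkey
    rw [← h3]
    ring
  obtain ⟨e, hBe⟩ := hBrep
  -- Step B : the polynomial `B₀` and its representation.
  set bc : K := ∑ i, ∑ k ∈ (S.opOf B i).support, (S.opOf B i).coeff k * (⇑S.der)^[k] (S.a i)
    with hbc
  set B0 : R K n := ∑ i, S.applyOp (S.opOf B i)
      (MvPolynomial.X ((Sum.inl i, 0) : Vr n) - MvPolynomial.C (S.a i)) with hB0def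
  have hB0rep : B0 = Phi G - MvPolynomial.C bc := sum_applyOp_X_sub_C S (fun i => S.opOf B i)
  have hBB0 : B = B0 + MvPolynomial.C (bc + e) := by
    rw [hBe, hB0rep, map_add]
    ring
  -- Step C : substitute to show `∑ applyOp 𝓕ᵢ Hᵢ = C (bc + e)`, hence both vanish and `B = B₀`.
  have hsubB : S.subst B = 0 := subst_span_PS S hBPS.1
  have hsubXa : ∀ i : Fin n,
      S.subst (MvPolynomial.X ((Sum.inl i, 0) : Vr n) - MvPolynomial.C (S.a i)) = - S.H i := by
    intro i
    rw [map_sub, subst_X, subst_C]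
    simp only [Sum.elim_inl, Function.iterate_zero, id_eq]
    ring
  have hsubB0 : S.subst B0 = - ∑ i, S.applyOp (S.opOf B i) (S.H i) := by
    rw [hB0def, map_sum, ← Finset.sum_neg_distrib]
    apply Finset.sum_congr rfl
    intro i _
    rw [subst_applyOp, hsubXa, applyOp_neg]
  have hTC : ∑ i, S.applyOp (S.opOf B i) (S.H i) = MvPolynomial.C (bc + e) := by
    have h4 := congrArg (fun f => S.subst f) hBB0
    rw [hsubB, map_add, hsubB0, subst_C] at h4
    linear_combination h4
  -- Represent each `Hᵢ` as a `Phi` family.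
  choose hH hHeq using fun i : Fin n => exists_Phi_of_isHomogeneous (S.H_hom i)
  have hTPhi : ∑ i, S.applyOp (S.opOf B i) (S.H i)
      = Phi (∑ i, opF S.der (S.opOf B i) (hH i)) := by
    rw [Phi_finsetSum]
    apply Finset.sum_congr rfl
    intro i _
    rw [hHeq i, applyOp_Phi]
  have hbce : bc + e = 0 := (Phi_eq_C (by rw [← hTPhi, hTC])).2
  have hFH : ∑ i, S.applyOp (S.opOf B i) (S.H i) = 0 := by
    rw [hTC, hbce, map_zero]
  have hBeqB0 : B = B0 := by
    rw [hBB0, hbce, map_zero, add_zero]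
  -- Step D : `B = Lop ∙ B'`, hence `Lop ≠ 0`.
  have hBop : B = S.applyOp Lop B' := by
    rw [hBeqB0, hB0def, hB', applyOp_finsetSum]
    apply Finset.sum_congr rfl
    intro i _
    exact hcomp i _
  have hLop0 : Lop ≠ 0 := by
    intro h
    apply hB0
    rw [hBop, h, applyOp_zero_left]
  -- Step E : degree bound `deg (Lfam i) ≤ deg (opOf B i)`.
  have hdeg : ∀ i : Fin n, (Lfam i).natDegree ≤ (S.opOf B i).natDegree := by
    intro i
    by_cases hLi : Lfam i = 0
    · rw [hLi, Polynomial.natDegree_zero]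
      exact Nat.zero_le _
    · have h1 : Phi (embv (Sum.inl i) (S.opOf B i))
          = Phi (opF S.der Lop (embv (Sum.inl i) (Lfam i))) := by
        rw [← applyOp_X, ← applyOp_Phi, ← applyOp_X]
        exact hcomp i _
      have h2 := Phi_inj h1
      have h3 : embv (Sum.inl i) (S.opOf B i)
            ((Sum.inl i, (Lfam i).natDegree + Lop.natDegree) : Vr n)
          = Lop.leadingCoeff
            * embv (Sum.inl i) (Lfam i) ((Sum.inl i, (Lfam i).natDegree) : Vr n) := by
        rw [h2]
        exact opF_top hLop0 (embv_vanish (Sum.inl i) (Lfam i)) (Sum.inl i)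
      rw [embv_apply, if_pos rfl, embv_apply, if_pos rfl, Polynomial.coeff_natDegree] at h3
      have h4 : (S.opOf B i).coeff ((Lfam i).natDegree + Lop.natDegree) ≠ 0 := by
        rw [h3]
        exact mul_ne_zero (Polynomial.leadingCoeff_ne_zero.mpr hLop0)
          (Polynomial.leadingCoeff_ne_zero.mpr hLi)
      have h5 := Polynomial.le_natDegree_of_ne_zero h4
      omega
  -- Step F : `∑ applyOp (Lfam i) Hᵢ = 0`.
  set Efam : Vr n →₀ K := ∑ i, opF S.der (Lfam i) (hH i) with hEfamdef
  have hE : ∑ i, S.applyOp (Lfam i) (S.H i) = Phi Efam := by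
    rw [hEfamdef, Phi_finsetSum]
    apply Finset.sum_congr rfl
    intro i _
    rw [hHeq i, applyOp_Phi]
  have hop : S.applyOp Lop (Phi Efam) = 0 := by
    rw [← hE, applyOp_finsetSum, ← hFH]
    apply Finset.sum_congr rfl
    intro i _
    exact (hcomp i (S.H i)).symm
  have hEfam0 : Efam = 0 := by
    by_contra hne
    have hsne : Efam.support.Nonempty := Finsupp.support_nonempty_iff.mpr hne
    set M : ℕ := (Efam.support.image Prod.snd).max' (hsne.image _) with hM
    obtain ⟨w₀, hw₀m, hw₀⟩ := Finset.mem_image.mp (Finset.max'_mem (Efam.support.image Prod.snd)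
      (hsne.image _))
    rw [← hM] at hw₀
    have hvan : ∀ v t, M < t → Efam ((v, t) : Vr n) = 0 := by
      intro v t ht
      by_contra h0
      have hmem : ((v, t) : Vr n) ∈ Efam.support := Finsupp.mem_support_iff.mpr h0
      have hle := Finset.le_max' (Efam.support.image Prod.snd) t
        (Finset.mem_image.mpr ⟨(v, t), hmem, rfl⟩)
      omega
    have htop := opF_top (der := S.der) hLop0 hvan w₀.1
    rw [applyOp_Phi] at hop
    rw [Phi_eq_zero hop] at htop
    have hne0 : Efam ((w₀.1, M) : Vr n) ≠ 0 := by
      have hw : ((w₀.1, M) : Vr n) = w₀ := by rw [← hw₀]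
      rw [hw]
      exact Finsupp.mem_support_iff.mp hw₀m
    apply hne0
    have h0 : (0 : K) = Lop.leadingCoeff * Efam ((w₀.1, M) : Vr n) := htop
    rcases mul_eq_zero.mp h0.symm with h | h
    · exact absurd h (Polynomial.leadingCoeff_ne_zero.mpr hLop0)
    · exact h
  have hE0 : ∑ i, S.applyOp (Lfam i) (S.H i) = 0 := by
    rw [hE, hEfam0, Phi_zero]
  -- Step G : `B'` is a combination of the `∂^k Fᵢ`.
  have hB'eq : B' = ∑ i, S.applyOp (Lfam i) (S.F i) := by
    have hXa : ∀ i : Fin n,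
        MvPolynomial.X ((Sum.inl i, 0) : Vr n) - MvPolynomial.C (S.a i) = S.F i - S.H i := by
      intro i
      unfold Sys.F
      ring
    rw [hB']
    calc ∑ i, S.applyOp (Lfam i) (MvPolynomial.X ((Sum.inl i, 0) : Vr n)
          - MvPolynomial.C (S.a i))
        = ∑ i, (S.applyOp (Lfam i) (S.F i) - S.applyOp (Lfam i) (S.H i)) := by
          apply Finset.sum_congr rfl
          intro i _
          rw [hXa, applyOp_sub]
      _ = ∑ i, S.applyOp (Lfam i) (S.F i) - ∑ i, S.applyOp (Lfam i) (S.H i) :=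
          Finset.sum_sub_distrib _ _
      _ = ∑ i, S.applyOp (Lfam i) (S.F i) := by rw [hE0, sub_zero]
  have hspan : B' ∈ Ideal.span S.PSset := by
    rw [hB'eq]
    apply Ideal.sum_mem
    intro i _
    unfold Sys.applyOp
    apply Ideal.sum_mem
    intro k hk
    apply Ideal.mul_mem_left
    apply Ideal.subset_span
    refine ⟨i, k, ?_, rfl⟩
    have h1 : k ≤ (Lfam i).natDegree := Polynomial.le_natDegree_of_mem_supp k hk
    have h2 := hdeg i
    have h3 := opOf_natDegree_le S hBPS.2 i
    omega
  -- Step H : the variables of `B'`.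
  have hB'rep : B' = Phi (∑ i, embv (Sum.inl i) (Lfam i))
      - MvPolynomial.C (∑ i, ∑ k ∈ (Lfam i).support, (Lfam i).coeff k * (⇑S.der)^[k] (S.a i)) := by
    rw [hB']
    exact sum_applyOp_X_sub_C S Lfam
  have hvars : ∀ w ∈ B'.vars, ∃ i : Fin n, w.1 = Sum.inl i ∧ w.2 ∈ (Lfam i).support := by
    intro w hw
    rw [hB'rep] at hw
    have hw2 := MvPolynomial.vars_sub_subset (R := K) (q := MvPolynomial.C (∑ i, ∑ k ∈ (Lfam i).support, (Lfam i).coeff k * (⇑S.der)^[k] (S.a i))) (p := Phi (∑ i, embv (Sum.inl i) (Lfam i))) hw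
    rw [Finset.mem_union] at hw2
    rcases hw2 with hw2 | hw2
    · have hws := mem_support_of_mem_vars_Phi hw2
      rw [Finsupp.mem_support_iff, Finsupp.finset_sum_apply] at hws
      obtain ⟨i, _, hne⟩ := Finset.exists_ne_zero_of_sum_ne_zero hws
      have hs2 := embv_support (Finsupp.mem_support_iff.mpr hne)
      exact ⟨i, hs2.1, hs2.2⟩
    · rw [MvPolynomial.vars_C] at hw2
      exact absurd hw2 (Finset.notMem_empty w)
  refine ⟨⟨hspan, ?_⟩, ?_⟩
  · intro w hw
    obtain ⟨i, h1, h2⟩ := hvars w hw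
    have hwk : w.2 ≤ S.Nn - S.o i - S.gamT := by
      have ha := Polynomial.le_natDegree_of_mem_supp w.2 h2
      have hb := hdeg i
      have hc := opOf_natDegree_le S hBPS.2 i
      omega
    rw [h1]
    exact hwk
  · intro w hw
    obtain ⟨i, h1, _⟩ := hvars w hw
    rw [h1]
    rfl

end DPPE
end

section
/- For every nonzero linear differential polynomial B in (G₀) = (PS) ∩ K{X}, the number of elements of G₀ satisfies |G₀| ≥ c(B) + 1, where c(B) is the co-order of B in (PS). -/
open MvPolynomial

namespace DPPE

variable {K : Type} [Field K] {n : ℕ}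

section Aux

open Finset

lemma linear_support {f : R K n} (hf : IsLinearPoly f) {d : Vr n →₀ ℕ}
    (hd : d ∈ f.support) : d = 0 ∨ ∃ w : Vr n, d = Finsupp.single w 1 := by
  classical
  have hf' : f.totalDegree ≤ 1 := hf
  have h1 : (d.sum fun _ e => e) ≤ 1 := le_trans (MvPolynomial.le_totalDegree hd) hf'
  rw [Finsupp.sum] at h1
  rcases Nat.le_one_iff_eq_zero_or_eq_one.mp h1 with h | h
  · left
    ext w
    by_cases hw : w ∈ d.support
    · exact (Finset.sum_eq_zero_iff.mp h) w hw
    · simpa using Finsupp.notMem_support_iff.mp hw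
  · right
    obtain ⟨w₀, hw₀⟩ : d.support.Nonempty := by
      rw [Finset.nonempty_iff_ne_empty]
      intro hemp
      rw [Finsupp.support_eq_empty.mp hemp] at h
      simpa using h
    refine ⟨w₀, ?_⟩
    have hle : d w₀ ≤ 1 := h ▸ Finset.single_le_sum (fun _ _ => Nat.zero_le _) hw₀
    have hge : 1 ≤ d w₀ := Nat.one_le_iff_ne_zero.mpr (Finsupp.mem_support_iff.mp hw₀)
    have hw01 : d w₀ = 1 := le_antisymm hle hge
    ext w
    rcases eq_or_ne w w₀ with rfl | hne
    · simp [hw01]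
    · rw [Finsupp.single_eq_of_ne' (Ne.symm hne)]
      by_contra hw
      have hmem : w ∈ d.support := Finsupp.mem_support_iff.mpr hw
      have h2 : 2 ≤ ∑ x ∈ d.support, d x := by
        calc 2 = 1 + 1 := rfl
        _ ≤ d w + d w₀ := add_le_add (Nat.one_le_iff_ne_zero.mpr hw) hge
        _ = ∑ x ∈ ({w, w₀} : Finset (Vr n)), d x := (Finset.sum_pair hne).symm
        _ ≤ ∑ x ∈ d.support, d x := Finset.sum_le_sum_of_subset (by
            intro x hx
            rcases Finset.mem_insert.mp hx with rfl | hx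
            · exact hmem
            · rw [Finset.mem_singleton.mp hx]; exact hw₀)
      omega

lemma mem_vars_of_cf {f : R K n} {w : Vr n} (h : cf f w.1 w.2 ≠ 0) : w ∈ f.vars := by
  rw [MvPolynomial.mem_vars]
  refine ⟨Finsupp.single w 1, MvPolynomial.mem_support_iff.mpr ?_, by simp⟩
  simpa [cf] using h

lemma cf_of_mem_vars {f : R K n} (hf : IsLinearPoly f) {w : Vr n}
    (h : w ∈ f.vars) : cf f w.1 w.2 ≠ 0 := by
  rw [MvPolynomial.mem_vars] at h
  obtain ⟨d, hd, hwd⟩ := h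
  rcases linear_support hf hd with rfl | ⟨w', rfl⟩
  · simp at hwd
  · have hww : w = w' := by
      have := Finsupp.support_single_subset hwd
      simpa using this
    subst hww
    simpa [cf] using MvPolynomial.mem_support_iff.mp hd

lemma CX_eq_monomial (a : K) (v : Vr n) :
    (C a * X v : R K n) = MvPolynomial.monomial (Finsupp.single v 1) a := by
  rw [← pow_one (X v : R K n), MvPolynomial.X_pow_eq_monomial, MvPolynomial.C_mul_monomial,
    mul_one]

lemma vars_CX_subset (a : K) (v : Vr n) : (C a * X v : R K n).vars ⊆ {v} := by
  rw [CX_eq_monomial]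
  rcases eq_or_ne a 0 with rfl | h
  · simp
  · rw [MvPolynomial.vars_monomial h]
    exact Finsupp.support_single_subset

lemma cf_CX (a : K) (v : Vr n) (u1 : Fin n ⊕ Fin (n - 1)) (u2 : ℕ) :
    cf (C a * X v : R K n) u1 u2 = if v = (u1, u2) then a else 0 := by
  rw [cf, CX_eq_monomial, MvPolynomial.coeff_monomial]
  refine if_congr ?_ rfl rfl
  exact Finsupp.single_left_inj (Nat.one_ne_zero)

lemma cf_C (x : K) (u1 : Fin n ⊕ Fin (n - 1)) (u2 : ℕ) : cf (C x : R K n) u1 u2 = 0 := by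
  rw [cf, MvPolynomial.coeff_C, if_neg]
  intro h
  exact Nat.one_ne_zero (by simpa using DFunLike.congr_fun h ((u1, u2) : Vr n))

lemma linear_rep {f : R K n} (hf : IsLinearPoly f) :
    f = C (MvPolynomial.coeff 0 f) + ∑ w ∈ f.vars, C (cf f w.1 w.2) * X w := by
  classical
  have hsub : f.support ⊆ insert 0 (f.vars.image fun w => Finsupp.single w 1) := by
    intro d hd
    rcases linear_support hf hd with rfl | ⟨w, rfl⟩
    · exact Finset.mem_insert_self _ _
    · refine Finset.mem_insert_of_mem (Finset.mem_image.mpr ⟨w, ?_, rfl⟩)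
      rw [MvPolynomial.mem_vars]
      exact ⟨_, hd, by simp⟩
  have h0 : (0 : Vr n →₀ ℕ) ∉ f.vars.image fun w => Finsupp.single w 1 := by
    simp only [Finset.mem_image, not_exists]
    rintro w ⟨-, hw⟩
    exact Nat.one_ne_zero (by simpa using DFunLike.congr_fun hw w)
  calc f = ∑ d ∈ f.support, MvPolynomial.monomial d (MvPolynomial.coeff d f) := f.as_sum
  _ = ∑ d ∈ insert 0 (f.vars.image fun w => Finsupp.single w 1),
        MvPolynomial.monomial d (MvPolynomial.coeff d f) := by
      apply Finset.sum_subset hsub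
      intro d _ hd
      rw [MvPolynomial.notMem_support_iff.mp hd, map_zero]
  _ = C (MvPolynomial.coeff 0 f) + ∑ w ∈ f.vars, C (cf f w.1 w.2) * X w := by
      rw [Finset.sum_insert h0, Finset.sum_image
        (fun w _ w' _ h => Finsupp.single_left_injective (Nat.one_ne_zero) h)]
      refine congrArg₂ (· + ·) MvPolynomial.C_apply.symm ?_
      refine Finset.sum_congr rfl fun w _ => ?_
      rw [CX_eq_monomial]
      simp only [cf, Prod.mk.eta]

end Aux
section DerAux

lemma sum_step {M : Type} [AddCommMonoid M] (c : ℕ) (u v : ℕ → M) :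
    ∑ s ∈ Finset.range (c + 2),
        ((if s ≤ c then u s else 0) + (if s = 0 then 0 else v s))
      = ∑ s ∈ Finset.range (c + 1), (u s + v (s + 1)) := by
  rw [Finset.sum_add_distrib, Finset.sum_add_distrib]
  congr 1
  · rw [Finset.sum_range_succ, if_neg (by omega), add_zero]
    refine Finset.sum_congr rfl fun s hs => ?_
    rw [if_pos (by rw [Finset.mem_range] at hs; omega)]
  · rw [Finset.sum_range_succ', if_pos rfl, add_zero]
    refine Finset.sum_congr rfl fun s hs => ?_
    rw [if_neg (Nat.succ_ne_zero s)]

namespace Sys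

lemma iterD_C (S : Sys K n) (b : K) (k : ℕ) :
    (⇑S.D)^[k] (C b) = C ((⇑S.der)^[k] b) := by
  induction k with
  | zero => rfl
  | succ k ih =>
    rw [Function.iterate_succ_apply', ih, S.hD_C, Function.iterate_succ_apply']

lemma iterD_X (S : Sys K n) (v : Fin n ⊕ Fin (n - 1)) (k : ℕ) :
    (⇑S.D)^[k] (X ((v, 0) : Vr n) : R K n) = X (v, k) := by
  induction k with
  | zero => rfl
  | succ k ih => rw [Function.iterate_succ_apply', ih, S.hD_X]

lemma D_X' (S : Sys K n) (w : Vr n) : S.D (X w) = X (w.1, w.2 + 1) := by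
  have := S.hD_X w.1 w.2
  rwa [Prod.mk.eta] at this

lemma D_CX (S : Sys K n) (b : K) (w : Vr n) :
    S.D (C b * X w) = C (S.der b) * X w + C b * X (w.1, w.2 + 1) := by
  rw [Derivation.leibniz, smul_eq_mul, smul_eq_mul, S.hD_C, S.D_X']
  ring

lemma iterD_CX (S : Sys K n) (b : K) (w : Vr n) (c : ℕ) :
    ∃ a : ℕ → K, a c = b ∧
      (⇑S.D)^[c] (C b * X w) = ∑ s ∈ Finset.range (c + 1), C (a s) * X (w.1, w.2 + s) := by
  induction c with
  | zero => exact ⟨fun _ => b, rfl, by simp⟩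
  | succ c ih =>
    obtain ⟨a, hac, hrep⟩ := ih
    refine ⟨fun s => (if s ≤ c then S.der (a s) else 0) + (if s = 0 then 0 else a (s - 1)),
      by simp [hac, Nat.succ_ne_zero], ?_⟩
    rw [Function.iterate_succ_apply', hrep, map_sum]
    have hstep : ∀ s : ℕ, S.D (C (a s) * X ((w.1, w.2 + s) : Vr n))
        = C (S.der (a s)) * X ((w.1, w.2 + s) : Vr n)
          + C (a s) * X ((w.1, w.2 + (s + 1)) : Vr n) := fun s => S.D_CX (a s) (w.1, w.2 + s)
    calc ∑ s ∈ Finset.range (c + 1), S.D (C (a s) * X ((w.1, w.2 + s) : Vr n))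
        = ∑ s ∈ Finset.range (c + 1),
            ((fun s => C (S.der (a s)) * X ((w.1, w.2 + s) : Vr n)) s
              + (fun s => C (a (s - 1)) * X ((w.1, w.2 + s) : Vr n)) (s + 1)) := by
          refine Finset.sum_congr rfl fun s _ => ?_
          rw [hstep s]
          simp
    _ = ∑ s ∈ Finset.range (c + 2),
          ((if s ≤ c then C (S.der (a s)) * X ((w.1, w.2 + s) : Vr n) else 0)
            + (if s = 0 then 0 else C (a (s - 1)) * X ((w.1, w.2 + s) : Vr n))) := by
          rw [sum_step]
    _ = ∑ s ∈ Finset.range (c + 1 + 1),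
          C ((if s ≤ c then S.der (a s) else 0) + (if s = 0 then 0 else a (s - 1)))
            * X ((w.1, w.2 + s) : Vr n) := by
          refine Finset.sum_congr rfl fun s _ => ?_
          rw [map_add, add_mul, apply_ite C, map_zero, ite_mul, zero_mul,
            apply_ite C, map_zero, ite_mul, zero_mul]

lemma iterD_Cmul (S : Sys K n) (b : K) (g : R K n) (c : ℕ) :
    ∃ a : ℕ → K,
      (⇑S.D)^[c] (C b * g) = ∑ s ∈ Finset.range (c + 1), C (a s) * (⇑S.D)^[s] g := by
  induction c with
  | zero => exact ⟨fun _ => b, by simp⟩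
  | succ c ih =>
    obtain ⟨a, hrep⟩ := ih
    refine ⟨fun s => (if s ≤ c then S.der (a s) else 0) + (if s = 0 then 0 else a (s - 1)), ?_⟩
    rw [Function.iterate_succ_apply', hrep, map_sum]
    calc ∑ s ∈ Finset.range (c + 1), S.D (C (a s) * (⇑S.D)^[s] g)
        = ∑ s ∈ Finset.range (c + 1),
            ((fun s => C (S.der (a s)) * (⇑S.D)^[s] g) s
              + (fun s => C (a (s - 1)) * (⇑S.D)^[s] g) (s + 1)) := by
          refine Finset.sum_congr rfl fun s _ => ?_
          rw [Derivation.leibniz, smul_eq_mul, smul_eq_mul, S.hD_C]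
          simp only [Nat.add_sub_cancel, Function.iterate_succ_apply']
          ring
    _ = ∑ s ∈ Finset.range (c + 2),
          ((if s ≤ c then C (S.der (a s)) * (⇑S.D)^[s] g else 0)
            + (if s = 0 then 0 else C (a (s - 1)) * (⇑S.D)^[s] g)) := by rw [sum_step]
    _ = ∑ s ∈ Finset.range (c + 1 + 1),
          C ((if s ≤ c then S.der (a s) else 0) + (if s = 0 then 0 else a (s - 1)))
            * (⇑S.D)^[s] g := by
          refine Finset.sum_congr rfl fun s _ => ?_
          rw [map_add, add_mul, apply_ite C, map_zero, ite_mul, zero_mul,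
            apply_ite C, map_zero, ite_mul, zero_mul]

lemma iterD_add (S : Sys K n) (k : ℕ) (f g : R K n) :
    (⇑S.D)^[k] (f + g) = (⇑S.D)^[k] f + (⇑S.D)^[k] g := by
  induction k with
  | zero => rfl
  | succ k ih => rw [Function.iterate_succ_apply', ih, map_add,
      Function.iterate_succ_apply', Function.iterate_succ_apply']

lemma iterD_sub (S : Sys K n) (k : ℕ) (f g : R K n) :
    (⇑S.D)^[k] (f - g) = (⇑S.D)^[k] f - (⇑S.D)^[k] g := by
  induction k with
  | zero => rfl
  | succ k ih => rw [Function.iterate_succ_apply', ih, map_sub,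
      Function.iterate_succ_apply', Function.iterate_succ_apply']

lemma iterD_sum (S : Sys K n) (k : ℕ) {ι : Type} (s : Finset ι) (F : ι → R K n) :
    (⇑S.D)^[k] (∑ i ∈ s, F i) = ∑ i ∈ s, (⇑S.D)^[k] (F i) := by
  induction k with
  | zero => rfl
  | succ k ih =>
    rw [Function.iterate_succ_apply', ih, map_sum]
    exact Finset.sum_congr rfl fun i _ => (Function.iterate_succ_apply' _ _ _).symm

lemma iterD_rep (S : Sys K n) {f : R K n} (hf : IsLinearPoly f) (c : ℕ) :
    ∃ a : Vr n → ℕ → K, (∀ w, a w c = cf f w.1 w.2) ∧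
      (⇑S.D)^[c] f = C ((⇑S.der)^[c] (MvPolynomial.coeff 0 f)) +
        ∑ w ∈ f.vars, ∑ s ∈ Finset.range (c + 1), C (a w s) * X (w.1, w.2 + s) := by
  choose a ha hrep using fun w : Vr n => S.iterD_CX (cf f w.1 w.2) w c
  refine ⟨a, ha, ?_⟩
  conv_lhs => rw [linear_rep hf]
  rw [S.iterD_add, S.iterD_sum, S.iterD_C]
  congr 1
  exact Finset.sum_congr rfl fun w _ => hrep w

end Sys

end DerAux
section RepCor

namespace Sys

lemma iterD_vars (S : Sys K n) {f : R K n} (hf : IsLinearPoly f) (c : ℕ) {w' : Vr n}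
    (hw' : w' ∈ ((⇑S.D)^[c] f).vars) :
    ∃ w ∈ f.vars, ∃ s ≤ c, w' = (w.1, w.2 + s) := by
  classical
  obtain ⟨a, -, hrep⟩ := S.iterD_rep hf c
  rw [hrep] at hw'
  have h1 := MvPolynomial.vars_add_subset _ _ hw'
  rw [MvPolynomial.vars_C] at h1
  rw [Finset.empty_union] at h1
  have h2 := MvPolynomial.vars_sum_subset _ _ h1
  obtain ⟨w, hw, h3⟩ := Finset.mem_biUnion.mp h2
  have h4 := MvPolynomial.vars_sum_subset _ _ h3
  obtain ⟨s, hs, h5⟩ := Finset.mem_biUnion.mp h4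
  have h6 := vars_CX_subset _ _ h5
  refine ⟨w, hw, s, by rw [Finset.mem_range] at hs; omega, ?_⟩
  exact Finset.mem_singleton.mp h6

lemma iterD_linear (S : Sys K n) {f : R K n} (hf : IsLinearPoly f) (c : ℕ) :
    IsLinearPoly ((⇑S.D)^[c] f) := by
  obtain ⟨a, -, hrep⟩ := S.iterD_rep hf c
  show ((⇑S.D)^[c] f).totalDegree ≤ 1
  rw [hrep]
  refine le_trans (MvPolynomial.totalDegree_add _ _) (max_le (by simp) ?_)
  refine le_trans (MvPolynomial.totalDegree_finset_sum _ _) (Finset.sup_le fun w _ => ?_)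
  refine le_trans (MvPolynomial.totalDegree_finset_sum _ _) (Finset.sup_le fun s _ => ?_)
  refine le_trans (MvPolynomial.totalDegree_mul _ _) ?_
  simp [MvPolynomial.totalDegree_X]

lemma iterD_cf_top (S : Sys K n) {f : R K n} (hf : IsLinearPoly f)
    {v : Fin n ⊕ Fin (n - 1)} {T c : ℕ}
    (hT : ((v, T) : Vr n) ∈ f.vars) (hmax : ∀ k, ((v, k) : Vr n) ∈ f.vars → k ≤ T) :
    cf ((⇑S.D)^[c] f) v (T + c) = cf f v T := by
  classical
  obtain ⟨a, hac, hrep⟩ := S.iterD_rep hf c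
  rw [hrep]
  have hadd : cf (C ((⇑S.der)^[c] (MvPolynomial.coeff 0 f)) +
      ∑ w ∈ f.vars, ∑ s ∈ Finset.range (c + 1), C (a w s) * X (w.1, w.2 + s)) v (T + c)
      = cf (C ((⇑S.der)^[c] (MvPolynomial.coeff 0 f)) : R K n) v (T + c)
        + ∑ w ∈ f.vars, ∑ s ∈ Finset.range (c + 1),
            cf (C (a w s) * X ((w.1, w.2 + s) : Vr n) : R K n) v (T + c) := by
    rw [cf, cf, MvPolynomial.coeff_add]
    congr 1
    rw [MvPolynomial.coeff_sum]
    refine Finset.sum_congr rfl fun w _ => ?_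
    rw [MvPolynomial.coeff_sum]
    rfl
  rw [hadd, cf_C ((⇑S.der)^[c] (MvPolynomial.coeff 0 f)) v (T + c), zero_add]
  rw [Finset.sum_eq_single_of_mem ((v, T) : Vr n) hT]
  · rw [Finset.sum_eq_single_of_mem c (Finset.mem_range.mpr (by omega))]
    · rw [cf_CX]
      rw [if_pos rfl]
      exact hac _
    · intro s _ hsc
      rw [cf_CX, if_neg]
      intro hcontra
      have := (Prod.ext_iff.mp hcontra).2
      simp only at this
      omega
  · intro w hw hne
    refine Finset.sum_eq_zero fun s hs => ?_
    rw [cf_CX, if_neg]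
    intro hcontra
    obtain ⟨h1, h2⟩ := Prod.ext_iff.mp hcontra
    simp only at h1 h2
    rw [Finset.mem_range] at hs
    have hw2 : w.2 ≤ T := by
      refine hmax w.2 ?_
      rw [← h1, Prod.mk.eta]
      exact hw
    have hw2T : w.2 = T := by omega
    apply hne
    rw [← h1, ← hw2T, Prod.mk.eta]

end Sys

end RepCor
section SubstAux

namespace Sys

lemma subst_C (S : Sys K n) (b : K) : S.subst (C b) = C b := by
  rw [Sys.subst, MvPolynomial.aeval_C, MvPolynomial.algebraMap_eq]

lemma subst_X_succ (S : Sys K n) (v : Fin n ⊕ Fin (n - 1)) (k : ℕ) :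
    S.subst (X ((v, k + 1) : Vr n)) = S.D (S.subst (X ((v, k) : Vr n))) := by
  rw [Sys.subst, MvPolynomial.aeval_X, MvPolynomial.aeval_X]
  cases v with
  | inl i =>
    simp only [Sum.elim_inl]
    rw [Function.iterate_succ_apply']
  | inr j =>
    simp only [Sum.elim_inr]
    exact (S.hD_X _ _).symm

lemma subst_D (S : Sys K n) (f : R K n) : S.subst (S.D f) = S.D (S.subst f) := by
  induction f using MvPolynomial.induction_on with
  | C c => rw [S.hD_C, S.subst_C, S.subst_C, S.hD_C]
  | add p q hp hq => rw [map_add S.D, map_add, hp, hq, map_add, map_add]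
  | mul_X p w hp =>
    obtain ⟨v, k⟩ := w
    rw [Derivation.leibniz, smul_eq_mul, smul_eq_mul, map_add, map_mul, map_mul, hp,
      S.hD_X, S.subst_X_succ, map_mul, Derivation.leibniz, smul_eq_mul, smul_eq_mul]

lemma subst_iterD (S : Sys K n) (f : R K n) (k : ℕ) :
    S.subst ((⇑S.D)^[k] f) = (⇑S.D)^[k] (S.subst f) := by
  induction k with
  | zero => rfl
  | succ k ih => rw [Function.iterate_succ_apply', S.subst_D, ih,
      Function.iterate_succ_apply']

lemma subst_fix (S : Sys K n) {f : R K n} (h : ∀ w ∈ f.vars, (w.1).isRight) :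
    S.subst f = f := by
  rw [Sys.subst, MvPolynomial.aeval_def, MvPolynomial.algebraMap_eq]
  conv_rhs => rw [← MvPolynomial.eval₂_eta f]
  apply MvPolynomial.eval₂_congr
  intro w d hwd hcoeff
  have hw : w ∈ f.vars :=
    (MvPolynomial.mem_vars _).mpr ⟨d, MvPolynomial.mem_support_iff.mpr hcoeff, hwd⟩
  obtain ⟨v, k⟩ := w
  obtain ⟨j, rfl⟩ := Sum.isRight_iff.mp (h _ hw)
  simp

lemma subst_F (S : Sys K n) (i : Fin n) : S.subst (S.F i) = 0 := by
  have h1 : S.subst (X ((Sum.inl i, 0) : Vr n)) = C (S.a i) - S.H i := by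
    rw [Sys.subst, MvPolynomial.aeval_X]
    simp
  have h2 : S.subst (S.H i) = S.H i := S.subst_fix (S.H_u i)
  rw [Sys.F, map_add, map_sub, h1, h2, S.subst_C]
  ring

lemma subst_span_eq_zero (S : Sys K n) {f : R K n} (h : f ∈ Ideal.span S.PSset) :
    S.subst f = 0 := by
  have hle : Ideal.span S.PSset ≤ RingHom.ker S.subst.toRingHom := by
    rw [Ideal.span_le]
    rintro g ⟨i, k, -, rfl⟩
    rw [SetLike.mem_coe, RingHom.mem_ker]
    show S.subst ((⇑S.D)^[k] (S.F i)) = 0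
    rw [S.subst_iterD, S.subst_F]
    exact Function.iterate_fixed (map_zero S.D) k
  exact RingHom.mem_ker.mp (hle h)

end Sys

end SubstAux
section DecompAux

namespace Sys

lemma iterD_F_expand (S : Sys K n) (i : Fin n) (k : ℕ) :
    (⇑S.D)^[k] (S.F i)
      = X ((Sum.inl i, k) : Vr n) - C ((⇑S.der)^[k] (S.a i)) + (⇑S.D)^[k] (S.H i) := by
  rw [Sys.F, S.iterD_add, S.iterD_sub, S.iterD_C, S.iterD_X]

lemma H_linear (S : Sys K n) (i : Fin n) : IsLinearPoly (S.H i) := by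
  rcases eq_or_ne (S.H i) 0 with h0 | h0
  · show (S.H i).totalDegree ≤ 1
    rw [h0]
    simp
  · exact le_of_eq ((S.H_hom i).totalDegree h0)

lemma vars_iterD_H (S : Sys K n) (i : Fin n) (k : ℕ) :
    ∀ w ∈ ((⇑S.D)^[k] (S.H i)).vars, (w.1).isRight := by
  intro w hw
  obtain ⟨w', hw', s, hs, rfl⟩ := S.iterD_vars (S.H_linear i) k hw
  exact S.H_u i w' hw'

lemma decomp (S : Sys K n) {f : R K n} (hlin : IsLinearPoly f) (hx : xOnly f)
    (hspan : f ∈ Ideal.span S.PSset) (hXV : S.inXV f) :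
    f = ∑ w ∈ f.vars, C (cf f w.1 w.2) *
      Sum.elim (fun i => (⇑S.D)^[w.2] (S.F i)) (fun _ => (0 : R K n)) w.1 := by
  classical
  set Q := ∑ w ∈ f.vars, C (cf f w.1 w.2) *
      Sum.elim (fun i => (⇑S.D)^[w.2] (S.F i)) (fun _ => (0 : R K n)) w.1 with hQ
  have hQspan : Q ∈ Ideal.span S.PSset := by
    apply Ideal.sum_mem
    intro w hw
    obtain ⟨i, hi⟩ := Sum.isLeft_iff.mp (hx w hw)
    rw [hi, Sum.elim_inl]
    apply Ideal.mul_mem_left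
    apply Ideal.subset_span
    refine ⟨i, w.2, ?_, rfl⟩
    have := hXV w hw
    rw [hi] at this
    exact this
  have hfQ : f - Q = C (MvPolynomial.coeff 0 f) + ∑ w ∈ f.vars, C (cf f w.1 w.2) *
      (Sum.elim (fun i => C ((⇑S.der)^[w.2] (S.a i)) - (⇑S.D)^[w.2] (S.H i))
        (fun _ => (0 : R K n)) w.1) := by
    conv_lhs => rw [linear_rep hlin, hQ]
    rw [add_sub_assoc, ← Finset.sum_sub_distrib]
    congr 1
    refine Finset.sum_congr rfl fun w hw => ?_
    rw [← mul_sub]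
    congr 1
    obtain ⟨i, hi⟩ := Sum.isLeft_iff.mp (hx w hw)
    rw [hi, Sum.elim_inl, Sum.elim_inl, S.iterD_F_expand]
    have hweq : (X w : R K n) = X ((Sum.inl i, w.2) : Vr n) := by
      rw [← hi, Prod.mk.eta]
    rw [hweq]
    ring
  have hWvars : ∀ w ∈ (f - Q).vars, (w.1).isRight := by
    intro w hw
    rw [hfQ] at hw
    have h1 := MvPolynomial.vars_add_subset _ _ hw
    rw [MvPolynomial.vars_C, Finset.empty_union] at h1
    obtain ⟨w', hw', h2⟩ := Finset.mem_biUnion.mp (MvPolynomial.vars_sum_subset _ _ h1)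
    have h3 := MvPolynomial.vars_mul _ _ h2
    rcases Finset.mem_union.mp h3 with h4 | h4
    · rw [MvPolynomial.vars_C] at h4
      simp at h4
    · obtain ⟨i, hi⟩ := Sum.isLeft_iff.mp (hx w' hw')
      rw [hi, Sum.elim_inl] at h4
      rw [sub_eq_add_neg] at h4
      have h5 := MvPolynomial.vars_add_subset _ _ h4
      rcases Finset.mem_union.mp h5 with h6 | h6
      · rw [MvPolynomial.vars_C] at h6
        simp at h6
      · rw [MvPolynomial.vars_neg] at h6
        exact S.vars_iterD_H i w'.2 w h6
  have hWzero : f - Q = 0 := by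
    have h1 : S.subst (f - Q) = f - Q := S.subst_fix hWvars
    have h2 : S.subst (f - Q) = 0 := S.subst_span_eq_zero (Ideal.sub_mem _ hspan hQspan)
    rw [h1] at h2
    exact h2
  exact (sub_eq_zero.mp hWzero)

end Sys

lemma rkk_inl (i : Fin n) (k : ℕ) :
    rkk ((Sum.inl i, k) : Vr n) = toLex (false, toLex (k, (i.rev : ℕ))) := rfl

lemma rkk_inr (j : Fin (n - 1)) (k : ℕ) :
    rkk ((Sum.inr j, k) : Vr n) = toLex (true, toLex (k, (j : ℕ))) := rfl

lemma rkk_injective : Function.Injective (rkk (n := n)) := by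
  rintro ⟨v, k⟩ ⟨v', k'⟩ h
  cases v with
  | inl i =>
    cases v' with
    | inl i' =>
      rw [rkk_inl, rkk_inl] at h
      have h2 := toLex.injective h
      rw [Prod.mk.injEq] at h2
      have h3 := toLex.injective h2.2
      rw [Prod.mk.injEq] at h3
      have : i = i' := Fin.rev_injective (Fin.val_injective h3.2)
      rw [this, h3.1]
    | inr j' =>
      rw [rkk_inl, rkk_inr] at h
      have h2 := toLex.injective h
      rw [Prod.mk.injEq] at h2
      exact absurd h2.1 (by simp)
  | inr j =>
    cases v' with
    | inl i' =>
      rw [rkk_inr, rkk_inl] at h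
      have h2 := toLex.injective h
      rw [Prod.mk.injEq] at h2
      exact absurd h2.1 (by simp)
    | inr j' =>
      rw [rkk_inr, rkk_inr] at h
      have h2 := toLex.injective h
      rw [Prod.mk.injEq] at h2
      have h3 := toLex.injective h2.2
      rw [Prod.mk.injEq] at h3
      have : j = j' := Fin.val_injective h3.2
      rw [this, h3.1]

lemma rkk_not_le_inr {j : Fin (n - 1)} {k : ℕ} {i : Fin n} {k' : ℕ} :
    ¬ (rkk ((Sum.inr j, k) : Vr n) ≤ rkk ((Sum.inl i, k') : Vr n)) := by
  rw [rkk_inr, rkk_inl, Prod.Lex.le_iff]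
  push_neg
  refine ⟨by simp, fun h => absurd h (by simp)⟩

lemma rkk_le_ord {i i' : Fin n} {k k' : ℕ}
    (h : rkk ((Sum.inl i, k) : Vr n) ≤ rkk ((Sum.inl i', k') : Vr n)) : k ≤ k' := by
  rw [rkk_inl, rkk_inl, Prod.Lex.le_iff] at h
  rcases h with h | ⟨-, h⟩
  · exact absurd h (lt_irrefl false)
  · rw [Prod.Lex.le_iff] at h
    rcases h with h | ⟨h, -⟩
    · exact le_of_lt h
    · exact le_of_eq h

lemma lead_unique {g : R K n} {v v' : Vr n} (h : IsLead g v) (h' : IsLead g v') : v = v' :=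
  rkk_injective (le_antisymm (h'.2 v h.1) (h.2 v' h'.1))

end DecompAux
/-- For every nonzero linear differential polynomial `B` in
`(G₀) = (PS) ∩ K{X}`, the number of elements of `G₀` satisfies `|G₀| ≥ c(B) + 1`,
where `c(B)` is the co-order of `B` in `(PS)`. -/
theorem statement_4 {K : Type} [Field K] {n : ℕ} (S : Sys K n) (G : Finset (R K n))
    (hG : S.IsAssocGB G) (B : R K n) (hB0 : B ≠ 0) (hBlin : IsLinearPoly B)
    (hBPS : S.PSIdealMem B) (hBx : xOnly B) :
    S.coOrd B + 1 ≤ (G0 G).card := by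
  classical
  obtain ⟨hGel, hGspan, hGlead, hGred⟩ := hG
  by_cases hv : B.vars = ∅
  · obtain ⟨g, hg, v, hlg, hlB⟩ := hGred B hBPS.1 hBPS.2 hBlin hB0
    have hvmem := hlB.1
    rw [hv] at hvmem
    exact absurd hvmem (Finset.notMem_empty v)
  have hvne : B.vars.Nonempty := Finset.nonempty_iff_ne_empty.mpr hv
  have hvne' : (B.vars.image Prod.snd).Nonempty := hvne.image _
  set t := (B.vars.image Prod.snd).max' hvne' with ht
  have hglob : ∀ w ∈ B.vars, w.2 ≤ t := fun w hw =>
    Finset.le_max' _ _ (Finset.mem_image_of_mem _ hw)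
  obtain ⟨w₁, hw₁mem, hw₁2⟩ : ∃ w ∈ B.vars, w.2 = t := by
    obtain ⟨w, hw, h2⟩ := Finset.mem_image.mp ((B.vars.image Prod.snd).max'_mem hvne')
    exact ⟨w, hw, h2⟩
  obtain ⟨i₁, hi₁⟩ := Sum.isLeft_iff.mp (hBx w₁ hw₁mem)
  have htmem : ((w₁.1, t) : Vr n) ∈ B.vars := by
    rw [← hw₁2, Prod.mk.eta]
    exact hw₁mem
  have htmax : ∀ k, ((w₁.1, k) : Vr n) ∈ B.vars → k ≤ t := fun k hk => hglob _ hk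
  have hsurv : ∀ c, cf ((⇑S.D)^[c] B) w₁.1 (t + c) = cf B w₁.1 t :=
    fun c => S.iterD_cf_top hBlin htmem htmax
  have hcf0 : cf B w₁.1 t ≠ 0 := cf_of_mem_vars hBlin htmem
  have hvmem : ∀ c, ((w₁.1, t + c) : Vr n) ∈ ((⇑S.D)^[c] B).vars := by
    intro c
    apply mem_vars_of_cf
    rw [hsurv c]
    exact hcf0
  have hbdd : BddAbove {c : ℕ | S.PSIdealMem ((⇑S.D)^[c] B)} := by
    refine ⟨S.Nn, fun c hc => ?_⟩
    have hx := hc.2 _ (hvmem c)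
    have hx' : t + c ≤ S.Nn - S.o i₁ - S.gamT := by simpa [hi₁] using hx
    omega
  have hmem : S.PSIdealMem ((⇑S.D)^[S.coOrd B] B) := by
    have h0 : (0 : ℕ) ∈ {c : ℕ | S.PSIdealMem ((⇑S.D)^[c] B)} := by
      simp only [Set.mem_setOf_eq, Function.iterate_zero_apply]
      exact hBPS
    exact Nat.sSup_mem ⟨0, h0⟩ hbdd
  set m := S.coOrd B with hm
  have hXVm : S.inXV ((⇑S.D)^[m] B) := hmem.2
  have key : ∀ w ∈ B.vars, ∀ i : Fin n, w.1 = Sum.inl i →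
      w.2 + m ≤ S.Nn - S.o i - S.gamT := by
    intro w hw i hi
    set s := (B.vars.filter (fun w' => w'.1 = w.1)).image Prod.snd with hs
    have hne : s.Nonempty :=
      ⟨w.2, Finset.mem_image.mpr ⟨w, Finset.mem_filter.mpr ⟨hw, rfl⟩, rfl⟩⟩
    set T := s.max' hne with hT
    have hTmem : ((w.1, T) : Vr n) ∈ B.vars := by
      obtain ⟨w', hw', h2⟩ := Finset.mem_image.mp (s.max'_mem hne)
      have h1 := Finset.mem_filter.mp hw'
      rw [hT, ← h2, ← h1.2, Prod.mk.eta]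
      exact h1.1
    have hTmax : ∀ k, ((w.1, k) : Vr n) ∈ B.vars → k ≤ T := fun k hk =>
      Finset.le_max' s _ (Finset.mem_image.mpr ⟨(w.1, k), Finset.mem_filter.mpr ⟨hk, rfl⟩, rfl⟩)
    have hwT : w.2 ≤ T :=
      Finset.le_max' s _ (Finset.mem_image.mpr ⟨w, Finset.mem_filter.mpr ⟨hw, rfl⟩, rfl⟩)
    have hsv : cf ((⇑S.D)^[m] B) w.1 (T + m) = cf B w.1 T := S.iterD_cf_top hBlin hTmem hTmax
    have hmemv : ((w.1, T + m) : Vr n) ∈ ((⇑S.D)^[m] B).vars := by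
      apply mem_vars_of_cf
      rw [hsv]
      exact cf_of_mem_vars hBlin hTmem
    have hx := hXVm _ hmemv
    have hx' : T + m ≤ S.Nn - S.o i - S.gamT := by simpa [hi] using hx
    omega
  have hPspan : ∀ c ≤ m, (⇑S.D)^[c] B ∈ Ideal.span S.PSset := by
    intro c hc
    rw [S.decomp hBlin hBx hBPS.1 hBPS.2, S.iterD_sum]
    apply Ideal.sum_mem
    intro w hw
    obtain ⟨i, hi⟩ := Sum.isLeft_iff.mp (hBx w hw)
    simp only [hi, Sum.elim_inl]
    obtain ⟨a, ha⟩ := S.iterD_Cmul (cf B (Sum.inl i) w.2) ((⇑S.D)^[w.2] (S.F i)) c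
    rw [ha]
    apply Ideal.sum_mem
    intro s hs
    apply Ideal.mul_mem_left
    apply Ideal.subset_span
    rw [← Function.iterate_add_apply]
    refine ⟨i, s + w.2, ?_, rfl⟩
    have h1 := key w hw i hi
    have h2 : s < c + 1 := Finset.mem_range.mp hs
    omega
  have hPXV : ∀ c ≤ m, S.inXV ((⇑S.D)^[c] B) := by
    intro c hc w' hw'
    obtain ⟨w, hw, s, hs, rfl⟩ := S.iterD_vars hBlin c hw'
    obtain ⟨i, hi⟩ := Sum.isLeft_iff.mp (hBx w hw)
    have h1 := key w hw i hi
    simp only [hi, Sum.elim_inl]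
    omega
  have hPlin : ∀ c, IsLinearPoly ((⇑S.D)^[c] B) := fun c => S.iterD_linear hBlin c
  have hPne : ∀ c, (⇑S.D)^[c] B ≠ 0 := by
    intro c h0
    apply hcf0
    rw [← hsurv c, h0]
    simp [cf]
  have hEx : ∀ c, c ≤ m → ∃ g, g ∈ G ∧ ∃ v : Vr n, IsLead g v ∧ IsLead ((⇑S.D)^[c] B) v := by
    intro c hc
    obtain ⟨g, hgG, v, h1, h2⟩ := hGred _ (hPspan c hc) (hPXV c hc) (hPlin c) (hPne c)
    exact ⟨g, hgG, v, h1, h2⟩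
  choose g hgG v hvl hvP using hEx
  have hvord : ∀ c (hc : c ≤ m), (v c hc).2 = t + c := by
    intro c hc
    obtain ⟨w, hw, s, hs, hEq⟩ := S.iterD_vars hBlin c (hvP c hc).1
    obtain ⟨i, hi⟩ := Sum.isLeft_iff.mp (hBx w hw)
    have hle : w.2 + s ≤ t + c := by
      have := hglob w hw
      omega
    have hge := (hvP c hc).2 _ (hvmem c)
    rw [hEq, hi, hi₁] at hge
    have hge' := rkk_le_ord hge
    rw [hEq]
    show w.2 + s = t + c
    omega
  have hvleft : ∀ c (hc : c ≤ m), ∃ i : Fin n, (v c hc).1 = Sum.inl i := by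
    intro c hc
    obtain ⟨w, hw, s, hs, hEq⟩ := S.iterD_vars hBlin c (hvP c hc).1
    obtain ⟨i, hi⟩ := Sum.isLeft_iff.mp (hBx w hw)
    exact ⟨i, by rw [hEq]; exact hi⟩
  have hgx : ∀ c (hc : c ≤ m), xOnly (g c hc) := by
    intro c hc w hw
    have hle := (hvl c hc).2 w hw
    by_contra hL
    obtain ⟨j, hj⟩ := Sum.isRight_iff.mp (Sum.not_isLeft.mp (by simpa using hL))
    obtain ⟨i', hi'⟩ := hvleft c hc
    have hw' : w = ((Sum.inr j, w.2) : Vr n) := by rw [← hj, Prod.mk.eta]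
    have hv' : v c hc = ((Sum.inl i', (v c hc).2) : Vr n) := by rw [← hi', Prod.mk.eta]
    rw [hw', hv'] at hle
    exact rkk_not_le_inr hle
  have h1 : (Finset.range (m + 1)).card ≤ (G0 G).card := by
    apply Finset.card_le_card_of_injOn (fun c => if hc : c ≤ m then g c hc else 0)
    · intro c hcmem
      have hc : c ≤ m := by
        rw [Finset.mem_coe, Finset.mem_range] at hcmem
        omega
      simp only [dif_pos hc, Finset.mem_coe]
      unfold G0
      exact Finset.mem_filter.mpr ⟨hgG c hc, hgx c hc⟩
    · intro c hcmem c' hcmem' hEq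
      have hc : c ≤ m := by
        have : c < m + 1 := by simpa using hcmem
        omega
      have hc' : c' ≤ m := by
        have : c' < m + 1 := by simpa using hcmem'
        omega
      simp only [dif_pos hc, dif_pos hc'] at hEq
      have h2 : IsLead (g c hc) (v c' hc') := by
        rw [hEq]
        exact hvl c' hc'
      have h3 := lead_unique (hvl c hc) h2
      have h4 := congrArg Prod.snd h3
      rw [hvord c hc, hvord c' hc'] at h4
      omega
  rw [Finset.card_range] at h1
  exact h1

end DPPE
end
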